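/- arXiv:1401.1015 — 13 statements merged into one kernel-verified Lean document; each statement's English description precedes it below -/
import Mathlib

section
/- Let X, Y, V be finite-dimensional real normed vector spaces, let E : X × Y → V be continuously differentiable, let v ∈ V, and let (x₀,y₀) ∈ X × Y satisfy E(x₀,y₀) = v with the total derivative D := DE(x₀,y₀) : X × Y → V surjective (so v is a regular value at (x₀,y₀), and ker D is the tangent space at (x₀,y₀) to the level set E⁻¹(v)). Then the image of ker D under the projection (x,y) ↦ x is a proper subspace of X (i.e., (x₀,y₀) is a critical point of the projection restricted to the level set E⁻¹(v)) if and only if the restriction of D to the subspace {0} × Y is not surjective onto V (equivalently, the partial derivative of E with respect to the Y-variable at (x₀,y₀) has rank strictly less than dim V). -/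
/-- Lemma 3.2.4: a point of a regular level set of `E : X × Y → V` is a critical
point of the projection `(x, y) ↦ x` restricted to the level set iff the partial
derivative of `E` in the `Y`-direction is not surjective. -/
theorem stmt0 (X Y V : Type*)
    [NormedAddCommGroup X] [NormedSpace ℝ X] [FiniteDimensional ℝ X]
    [NormedAddCommGroup Y] [NormedSpace ℝ Y] [FiniteDimensional ℝ Y]
    [NormedAddCommGroup V] [NormedSpace ℝ V] [FiniteDimensional ℝ V]
    (E : X × Y → V) (hE : ContDiff ℝ 1 E) (v : V) (x₀ : X) (y₀ : Y)
    (hEv : E (x₀, y₀) = v)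
    (hreg : Function.Surjective (fderiv ℝ E (x₀, y₀))) :
    (LinearMap.ker (fderiv ℝ E (x₀, y₀) : X × Y →ₗ[ℝ] V)).map (LinearMap.fst ℝ X Y) ≠ ⊤ ↔
      ¬ Function.Surjective (fun y : Y => fderiv ℝ E (x₀, y₀) (0, y)) := by
  set D := fderiv ℝ E (x₀, y₀) with hD
  apply not_iff_not.mpr
  constructor
  · intro hmap w
    obtain ⟨⟨x, y⟩, hxy⟩ := hreg w
    have hx : x ∈ (LinearMap.ker (D : X × Y →ₗ[ℝ] V)).map (LinearMap.fst ℝ X Y) := by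
      rw [hmap]; trivial
    obtain ⟨⟨x', y'⟩, hker, hx'⟩ := hx
    simp only [LinearMap.fst_apply] at hx'
    refine ⟨y - y', ?_⟩
    show D (0, y - y') = w
    have : ((0 : X), y - y') = (x, y) - (x', y') := by
      simp [Prod.ext_iff, hx']
    rw [this, map_sub, hxy, show D (x', y') = 0 from LinearMap.mem_ker.mp hker, sub_zero]
  · intro hs
    rw [eq_top_iff]
    rintro x -
    obtain ⟨y, hy⟩ := hs (D (x, 0))
    refine ⟨(x, -y), ?_, rfl⟩
    have : ((x : X), -y) = (x, (0 : Y)) - (0, y) := by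
      simp [Prod.ext_iff]
    simp only [SetLike.mem_coe, LinearMap.mem_ker]
    show D (x, -y) = 0
    simp only [] at hy
    rw [this, map_sub, ← hy, sub_self]
end

section
/- Let A₁, A₂, A₃ > 0, let Π, f : ℝ³ → ℝ be differentiable, and let κ : ℝ³ → ℝ³ be a continuous map. Consider the Euler–Poisson vector field X on ℝ³ × ℝ³ (with coordinates (ν, ω)) defined by the equations A·ω' + ω × (A·ω + κ(ν)) = ν × ∇Π(ν) and ν' = ν × ω, where A·ω = (A₁ω₁, A₂ω₂, A₃ω₃) and × is the cross product on ℝ³. Define G(ν, ω) = A₁ω₁ν₁ + A₂ω₂ν₂ + A₃ω₃ν₃ + f(ν). Then the derivative of G along X (the inner product of the gradient of G on ℝ⁶ with X) vanishes at every point (ν, ω) with ν₁² + ν₂² + ν₃² = 1 if and only if (κ(ν) − ∇f(ν)) × ν = 0 for every ν with ν₁² + ν₂² + ν₃² = 1 (equivalently, κ(ν) = F(ν)·ν + ∇f(ν) on the unit sphere for some scalar function F). -/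
lemma clm_fin3 (L : (Fin 3 → ℝ) →L[ℝ] ℝ) (u : Fin 3 → ℝ) :
    L u = u 0 * L (Pi.single 0 1) + u 1 * L (Pi.single 1 1) + u 2 * L (Pi.single 2 1) := by
  have : u = u 0 • (Pi.single 0 1 : Fin 3 → ℝ) + u 1 • (Pi.single 1 1 : Fin 3 → ℝ)
      + u 2 • (Pi.single 2 1 : Fin 3 → ℝ) := by
    funext j; fin_cases j <;> simp [Pi.single_apply]
  rw [this]; simp [smul_eq_mul]

lemma fderivG (A₁ A₂ A₃ : ℝ) (f : (Fin 3 → ℝ) → ℝ) (hf : Differentiable ℝ f)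
    (ν ω u w : Fin 3 → ℝ) :
    fderiv ℝ (fun p : (Fin 3 → ℝ) × (Fin 3 → ℝ) =>
        A₁ * p.2 0 * p.1 0 + A₂ * p.2 1 * p.1 1 + A₃ * p.2 2 * p.1 2 + f p.1) (ν, ω) (u, w)
      = A₁ * (w 0 * ν 0 + ω 0 * u 0) + A₂ * (w 1 * ν 1 + ω 1 * u 1)
        + A₃ * (w 2 * ν 2 + ω 2 * u 2) + fderiv ℝ f ν u := by
  have h1 : ∀ i : Fin 3, HasFDerivAt (fun p : (Fin 3 → ℝ) × (Fin 3 → ℝ) => p.1 i)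
      ((ContinuousLinearMap.proj i).comp (ContinuousLinearMap.fst ℝ (Fin 3 → ℝ) (Fin 3 → ℝ))) (ν, ω) :=
    fun i => ((ContinuousLinearMap.proj i).comp
      (ContinuousLinearMap.fst ℝ (Fin 3 → ℝ) (Fin 3 → ℝ))).hasFDerivAt
  have h2 : ∀ i : Fin 3, HasFDerivAt (fun p : (Fin 3 → ℝ) × (Fin 3 → ℝ) => p.2 i)
      ((ContinuousLinearMap.proj i).comp (ContinuousLinearMap.snd ℝ (Fin 3 → ℝ) (Fin 3 → ℝ))) (ν, ω) :=
    fun i => ((ContinuousLinearMap.proj i).comp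
      (ContinuousLinearMap.snd ℝ (Fin 3 → ℝ) (Fin 3 → ℝ))).hasFDerivAt
  have hfc : HasFDerivAt (fun p : (Fin 3 → ℝ) × (Fin 3 → ℝ) => f p.1)
      ((fderiv ℝ f ν).comp (ContinuousLinearMap.fst ℝ (Fin 3 → ℝ) (Fin 3 → ℝ))) (ν, ω) := by
    exact (hf ν).hasFDerivAt.comp (ν, ω) hasFDerivAt_fst
  have t : ∀ i : Fin 3, ∀ A : ℝ,
      HasFDerivAt (fun p : (Fin 3 → ℝ) × (Fin 3 → ℝ) => A * p.2 i * p.1 i)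
      ((A * ω i) • ((ContinuousLinearMap.proj i).comp (ContinuousLinearMap.fst ℝ (Fin 3 → ℝ) (Fin 3 → ℝ)))
        + ν i • (A • ((ContinuousLinearMap.proj i).comp (ContinuousLinearMap.snd ℝ (Fin 3 → ℝ) (Fin 3 → ℝ))))) (ν, ω) :=
    fun i A => ((h2 i).const_mul A).mul (h1 i)
  have total := (((t 0 A₁).add (t 1 A₂)).add (t 2 A₃)).add hfc
  rw [(show HasFDerivAt (fun p : (Fin 3 → ℝ) × (Fin 3 → ℝ) =>
      A₁ * p.2 0 * p.1 0 + A₂ * p.2 1 * p.1 1 + A₃ * p.2 2 * p.1 2 + f p.1) _ (ν, ω) from total).fderiv]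
  simp only [ContinuousLinearMap.add_apply, ContinuousLinearMap.smul_apply,
    ContinuousLinearMap.comp_apply, ContinuousLinearMap.coe_fst', ContinuousLinearMap.coe_snd',
    ContinuousLinearMap.proj_apply, smul_eq_mul]
  ring

/-- Theorem 2.4.1 in Euler–Poisson form: for the rigid body with axially
symmetric potential `Π(ν)` and gyroscopic coefficient vector `κ(ν)`, the
function `G(ν,ω) = A₁ω₁ν₁ + A₂ω₂ν₂ + A₃ω₃ν₃ + f(ν)` has vanishing derivative
along the Euler–Poisson vector field at every point of the unit sphere iff
`(κ(ν) − ∇f(ν)) × ν = 0` on the unit sphere. -/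
theorem stmt4 (A₁ A₂ A₃ : ℝ) (hA₁ : 0 < A₁) (hA₂ : 0 < A₂) (hA₃ : 0 < A₃)
    (P f : (Fin 3 → ℝ) → ℝ) (hP : Differentiable ℝ P) (hf : Differentiable ℝ f)
    (κ : (Fin 3 → ℝ) → (Fin 3 → ℝ)) (hκ : Continuous κ) :
    let Amul : (Fin 3 → ℝ) → (Fin 3 → ℝ) := fun v => ![A₁ * v 0, A₂ * v 1, A₃ * v 2]
    let grad : ((Fin 3 → ℝ) → ℝ) → (Fin 3 → ℝ) → (Fin 3 → ℝ) :=
      fun F ν => fun i => fderiv ℝ F ν (Pi.single i 1)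
    let X : (Fin 3 → ℝ) × (Fin 3 → ℝ) → (Fin 3 → ℝ) × (Fin 3 → ℝ) :=
      fun p => (crossProduct p.1 p.2,
        ![(crossProduct p.1 (grad P p.1) - crossProduct p.2 (Amul p.2 + κ p.1)) 0 / A₁,
          (crossProduct p.1 (grad P p.1) - crossProduct p.2 (Amul p.2 + κ p.1)) 1 / A₂,
          (crossProduct p.1 (grad P p.1) - crossProduct p.2 (Amul p.2 + κ p.1)) 2 / A₃])
    let G : (Fin 3 → ℝ) × (Fin 3 → ℝ) → ℝ :=
      fun p => A₁ * p.2 0 * p.1 0 + A₂ * p.2 1 * p.1 1 + A₃ * p.2 2 * p.1 2 + f p.1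
    ((∀ ν ω : Fin 3 → ℝ, ν 0 ^ 2 + ν 1 ^ 2 + ν 2 ^ 2 = 1 →
        fderiv ℝ G (ν, ω) (X (ν, ω)) = 0) ↔
      (∀ ν : Fin 3 → ℝ, ν 0 ^ 2 + ν 1 ^ 2 + ν 2 ^ 2 = 1 →
        crossProduct (κ ν - grad f ν) ν = 0)) := by
  intro Amul grad X G
  have key : ∀ ν ω : Fin 3 → ℝ, fderiv ℝ G (ν, ω) (X (ν, ω))
      = -(ω 0 * crossProduct (κ ν - grad f ν) ν 0
        + ω 1 * crossProduct (κ ν - grad f ν) ν 1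
        + ω 2 * crossProduct (κ ν - grad f ν) ν 2) := by
    intro ν ω
    show fderiv ℝ G (ν, ω) (crossProduct ν ω, _) = _
    rw [fderivG A₁ A₂ A₃ f hf, clm_fin3]
    simp only [Amul, grad, cross_apply, Pi.sub_apply, Pi.add_apply, Matrix.cons_val_zero,
      Matrix.cons_val_one, Matrix.head_cons, Matrix.cons_val_two, Matrix.tail_cons]
    field_simp
    ring
  constructor
  · intro H ν hν
    have h := H ν (crossProduct (κ ν - grad f ν) ν) hν
    rw [key] at h
    funext i
    have h0 : crossProduct (κ ν - grad f ν) ν 0 = 0 ∧ crossProduct (κ ν - grad f ν) ν 1 = 0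
        ∧ crossProduct (κ ν - grad f ν) ν 2 = 0 := by
      refine ⟨?_, ?_, ?_⟩ <;>
        nlinarith [sq_nonneg (crossProduct (κ ν - grad f ν) ν 0),
          sq_nonneg (crossProduct (κ ν - grad f ν) ν 1),
          sq_nonneg (crossProduct (κ ν - grad f ν) ν 2)]
    fin_cases i
    · simpa using h0.1
    · simpa using h0.2.1
    · simpa using h0.2.2
  · intro H ν ω hν
    rw [key, H ν hν]
    simp
end

section
/- Let a > b > c > 0 and let λ₁, λ₂, λ₃ be nonzero real numbers. Define h, k : ℝ ∖ {a, b, c} → ℝ by h(σ) = (σ²/2)·(aλ₁²/(a−σ)² + bλ₂²/(b−σ)² + cλ₃²/(c−σ)²) and k(σ) = a²λ₁²/(a−σ)² + b²λ₂²/(b−σ)² + c²λ₃²/(c−σ)². Then the set of points σ ∈ ℝ ∖ {a, b, c} at which h'(σ) = 0 and k'(σ) = 0 simultaneously consists of exactly two points, one lying in the open interval (c, b) and the other in the open interval (b, a). -/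
noncomputable def Fg (a b c l1 l2 l3 σ : ℝ) : ℝ :=
  a^2*l1^2/(a-σ)^3 + b^2*l2^2/(b-σ)^3 + c^2*l3^2/(c-σ)^3

lemma aux_d2 (x σ : ℝ) (h : x - σ ≠ 0) :
    HasDerivAt (fun s : ℝ => 1/(x-s)^2) (2/(x-σ)^3) σ := by
  have h1 : HasDerivAt (fun s : ℝ => (x-s)^2) (2*(x-σ)^1*(-1)) σ := by
    simpa using ((hasDerivAt_id σ).const_sub x).fun_pow 2
  have h2 := (hasDerivAt_const σ (1:ℝ)).fun_div h1 (pow_ne_zero 2 h)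
  refine h2.congr_deriv ?_
  field_simp
  ring

lemma aux_d3 (x σ : ℝ) (h : x - σ ≠ 0) :
    HasDerivAt (fun s : ℝ => 1/(x-s)^3) (3/(x-σ)^4) σ := by
  have h1 : HasDerivAt (fun s : ℝ => (x-s)^3) (3*(x-σ)^2*(-1)) σ := by
    simpa using ((hasDerivAt_id σ).const_sub x).fun_pow 3
  have h2 := (hasDerivAt_const σ (1:ℝ)).fun_div h1 (pow_ne_zero 3 h)
  refine h2.congr_deriv ?_
  field_simp
  ring

lemma aux_dsq (x σ : ℝ) (h : x - σ ≠ 0) :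
    HasDerivAt (fun s : ℝ => s^2/(x-s)^2) (2*x*σ/(x-σ)^3) σ := by
  have h1 : HasDerivAt (fun s : ℝ => (x-s)^2) (2*(x-σ)^1*(-1)) σ := by
    simpa using ((hasDerivAt_id σ).const_sub x).fun_pow 2
  have h2 := (hasDerivAt_pow 2 σ).fun_div h1 (pow_ne_zero 2 h)
  refine h2.congr_deriv ?_
  field_simp
  ring

lemma Fg_hasDerivAt (a b c l1 l2 l3 σ : ℝ) (ha : a - σ ≠ 0) (hb : b - σ ≠ 0)
    (hc : c - σ ≠ 0) :
    HasDerivAt (Fg a b c l1 l2 l3)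
      (3*(a^2*l1^2/(a-σ)^4 + b^2*l2^2/(b-σ)^4 + c^2*l3^2/(c-σ)^4)) σ := by
  have d1 := (aux_d3 a σ ha).const_mul (a^2*l1^2)
  have d2 := (aux_d3 b σ hb).const_mul (b^2*l2^2)
  have d3 := (aux_d3 c σ hc).const_mul (c^2*l3^2)
  have dsum := (d1.fun_add d2).fun_add d3
  have he : Fg a b c l1 l2 l3 = fun s =>
      a^2*l1^2 * (1/(a-s)^3) + b^2*l2^2 * (1/(b-s)^3) + c^2*l3^2 * (1/(c-s)^3) := by
    funext s; unfold Fg; ring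
  rw [he]
  refine dsum.congr_deriv ?_
  ring

/-- The branch `σ ↦ (k(σ), h(σ))` of the bifurcation set of the free gyrostat
(with `a > b > c > 0` the inverse moments of inertia and nonzero gyrostatic
momenta `λ₁, λ₂, λ₃`) has exactly two cusps: the common zeros of `h'` and `k'`
on `ℝ ∖ {a, b, c}` are exactly two points, one in `(c, b)` and one in `(b, a)`. -/
theorem stmt7 (a b c l1 l2 l3 : ℝ) (hab : b < a) (hbc : c < b) (hc : 0 < c)
    (h1 : l1 ≠ 0) (h2 : l2 ≠ 0) (h3 : l3 ≠ 0) :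
    let h : ℝ → ℝ := fun σ => σ^2/2 *
      (a*l1^2/(a-σ)^2 + b*l2^2/(b-σ)^2 + c*l3^2/(c-σ)^2)
    let k : ℝ → ℝ := fun σ =>
      a^2*l1^2/(a-σ)^2 + b^2*l2^2/(b-σ)^2 + c^2*l3^2/(c-σ)^2
    ∃ σ₁ σ₂ : ℝ, σ₁ ∈ Set.Ioo c b ∧ σ₂ ∈ Set.Ioo b a ∧
      {σ : ℝ | σ ≠ a ∧ σ ≠ b ∧ σ ≠ c ∧ deriv h σ = 0 ∧ deriv k σ = 0} = {σ₁, σ₂} := by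
  intro h k
  have hb0 : 0 < b := lt_trans hc hbc
  have ha0 : 0 < a := lt_trans hb0 hab
  -- derivative of k
  have hk' : ∀ σ : ℝ, σ ≠ a → σ ≠ b → σ ≠ c →
      deriv k σ = 2 * Fg a b c l1 l2 l3 σ := by
    intro σ hA hB hC
    have hA' : a - σ ≠ 0 := sub_ne_zero.2 hA.symm
    have hB' : b - σ ≠ 0 := sub_ne_zero.2 hB.symm
    have hC' : c - σ ≠ 0 := sub_ne_zero.2 hC.symm
    have d1 := (aux_d2 a σ hA').const_mul (a^2*l1^2)
    have d2 := (aux_d2 b σ hB').const_mul (b^2*l2^2)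
    have d3 := (aux_d2 c σ hC').const_mul (c^2*l3^2)
    have dsum := (d1.fun_add d2).fun_add d3
    have he : k = fun s =>
        a^2*l1^2 * (1/(a-s)^2) + b^2*l2^2 * (1/(b-s)^2) + c^2*l3^2 * (1/(c-s)^2) := by
      funext s
      show a^2*l1^2/(a-s)^2 + b^2*l2^2/(b-s)^2 + c^2*l3^2/(c-s)^2 = _
      ring
    rw [he, dsum.deriv]
    unfold Fg; ring
  -- derivative of h
  have hh' : ∀ σ : ℝ, σ ≠ a → σ ≠ b → σ ≠ c →
      deriv h σ = σ * Fg a b c l1 l2 l3 σ := by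
    intro σ hA hB hC
    have hA' : a - σ ≠ 0 := sub_ne_zero.2 hA.symm
    have hB' : b - σ ≠ 0 := sub_ne_zero.2 hB.symm
    have hC' : c - σ ≠ 0 := sub_ne_zero.2 hC.symm
    have d1 := (aux_dsq a σ hA').const_mul (a*l1^2/2)
    have d2 := (aux_dsq b σ hB').const_mul (b*l2^2/2)
    have d3 := (aux_dsq c σ hC').const_mul (c*l3^2/2)
    have dsum := (d1.fun_add d2).fun_add d3
    have he : h = fun s =>
        a*l1^2/2 * (s^2/(a-s)^2) + b*l2^2/2 * (s^2/(b-s)^2) + c*l3^2/2 * (s^2/(c-s)^2) := by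
      funext s
      show s^2/2 * (a*l1^2/(a-s)^2 + b*l2^2/(b-s)^2 + c*l3^2/(c-s)^2) = _
      ring
    rw [he, dsum.deriv]
    unfold Fg; ring
  -- polynomial G with the same zeros as F away from a,b,c
  set G : ℝ → ℝ := fun σ => a^2*l1^2*((b-σ)^3*(c-σ)^3) + b^2*l2^2*((a-σ)^3*(c-σ)^3)
      + c^2*l3^2*((a-σ)^3*(b-σ)^3) with hG
  have hGcont : Continuous G := by rw [hG]; fun_prop
  have hGc : 0 < G c := by
    have e : G c = c^2*l3^2*((a-c)*(b-c))^3 := by rw [hG]; ring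
    rw [e]
    have hp : (0:ℝ) < (a-c)*(b-c) := by nlinarith
    positivity
  have hGb : G b < 0 := by
    have e : G b = (b^2*l2^2*(a-b)^3)*(c-b)^3 := by rw [hG]; ring
    rw [e]
    apply mul_neg_of_pos_of_neg
    · have hp : (0:ℝ) < a - b := by linarith
      positivity
    · exact Odd.pow_neg ⟨1, by norm_num⟩ (by linarith)
  have hGa : 0 < G a := by
    have e : G a = a^2*l1^2*((b-a)*(c-a))^3 := by rw [hG]; ring
    rw [e]
    have hp : (0:ℝ) < (b-a)*(c-a) := by nlinarith
    positivity
  have hFG : ∀ σ : ℝ, σ ≠ a → σ ≠ b → σ ≠ c →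
      (Fg a b c l1 l2 l3 σ = 0 ↔ G σ = 0) := by
    intro σ hA hB hC
    have hA' : a - σ ≠ 0 := sub_ne_zero.2 hA.symm
    have hB' : b - σ ≠ 0 := sub_ne_zero.2 hB.symm
    have hC' : c - σ ≠ 0 := sub_ne_zero.2 hC.symm
    have key : G σ = Fg a b c l1 l2 l3 σ * ((a-σ)^3*((b-σ)^3*(c-σ)^3)) := by
      rw [hG]; unfold Fg; field_simp
    constructor
    · intro h0; rw [key, h0, zero_mul]
    · intro h0
      rw [key] at h0
      have hne : (a-σ)^3*((b-σ)^3*(c-σ)^3) ≠ 0 :=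
        mul_ne_zero (pow_ne_zero 3 hA')
          (mul_ne_zero (pow_ne_zero 3 hB') (pow_ne_zero 3 hC'))
      exact (mul_eq_zero.1 h0).resolve_right hne
  -- existence of the two roots
  obtain ⟨σ₁, hσ₁mem, hσ₁G⟩ :=
    intermediate_value_Ioo' hbc.le hGcont.continuousOn (Set.mem_Ioo.2 ⟨hGb, hGc⟩)
  obtain ⟨σ₂, hσ₂mem, hσ₂G⟩ :=
    intermediate_value_Ioo hab.le hGcont.continuousOn (Set.mem_Ioo.2 ⟨hGb, hGa⟩)
  have hσ₁a : σ₁ ≠ a := ne_of_lt (lt_trans hσ₁mem.2 hab)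
  have hσ₁b : σ₁ ≠ b := ne_of_lt hσ₁mem.2
  have hσ₁c : σ₁ ≠ c := ne_of_gt hσ₁mem.1
  have hσ₂a : σ₂ ≠ a := ne_of_lt hσ₂mem.2
  have hσ₂b : σ₂ ≠ b := ne_of_gt hσ₂mem.1
  have hσ₂c : σ₂ ≠ c := ne_of_gt (lt_trans hbc hσ₂mem.1)
  have hF1 : Fg a b c l1 l2 l3 σ₁ = 0 := (hFG σ₁ hσ₁a hσ₁b hσ₁c).2 hσ₁G
  have hF2 : Fg a b c l1 l2 l3 σ₂ = 0 := (hFG σ₂ hσ₂a hσ₂b hσ₂c).2 hσ₂G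
  -- strict monotonicity of F on the two open intervals
  have monoIoo : ∀ u v : ℝ, c ≤ u → v ≤ a → (∀ x ∈ Set.Ioo u v, x ≠ b) →
      StrictMonoOn (Fg a b c l1 l2 l3) (Set.Ioo u v) := by
    intro u v hu hv hbne
    apply strictMonoOn_of_deriv_pos (convex_Ioo u v)
    · intro x hx
      have hxa : a - x ≠ 0 := sub_ne_zero.2 (ne_of_gt (lt_of_lt_of_le hx.2 hv))
      have hxb : b - x ≠ 0 := sub_ne_zero.2 (hbne x hx).symm
      have hxc : c - x ≠ 0 := sub_ne_zero.2 (ne_of_lt (lt_of_le_of_lt hu hx.1))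
      exact ((Fg_hasDerivAt a b c l1 l2 l3 x hxa hxb hxc
        ).differentiableAt.continuousAt).continuousWithinAt
    · intro x hx
      rw [interior_Ioo] at hx
      have hxa : a - x ≠ 0 := sub_ne_zero.2 (ne_of_gt (lt_of_lt_of_le hx.2 hv))
      have hxb : b - x ≠ 0 := sub_ne_zero.2 (hbne x hx).symm
      have hxc : c - x ≠ 0 := sub_ne_zero.2 (ne_of_lt (lt_of_le_of_lt hu hx.1))
      rw [(Fg_hasDerivAt a b c l1 l2 l3 x hxa hxb hxc).deriv]
      positivity
  have mono1 : StrictMonoOn (Fg a b c l1 l2 l3) (Set.Ioo c b) :=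
    monoIoo c b le_rfl hab.le (fun x hx => ne_of_lt hx.2)
  have mono2 : StrictMonoOn (Fg a b c l1 l2 l3) (Set.Ioo b a) :=
    monoIoo b a hbc.le le_rfl (fun x hx => ne_of_gt hx.1)
  -- conclusion
  refine ⟨σ₁, σ₂, hσ₁mem, hσ₂mem, ?_⟩
  ext σ
  simp only [Set.mem_setOf_eq, Set.mem_insert_iff, Set.mem_singleton_iff]
  constructor
  · rintro ⟨hA, hB, hC, hdh, hdk⟩
    have hF0 : Fg a b c l1 l2 l3 σ = 0 := by
      have e := hk' σ hA hB hC
      rw [e] at hdk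
      linarith
    have hloc : σ ∈ Set.Ioo c b ∨ σ ∈ Set.Ioo b a := by
      rcases lt_or_gt_of_ne hC with hlt | hgt
      · exfalso
        have p1 : (0:ℝ) < a - σ := by linarith
        have p2 : (0:ℝ) < b - σ := by linarith
        have p3 : (0:ℝ) < c - σ := by linarith
        have hpos : 0 < Fg a b c l1 l2 l3 σ := by unfold Fg; positivity
        exact hpos.ne' hF0
      · rcases lt_or_gt_of_ne hB with hltb | hgtb
        · exact Or.inl ⟨hgt, hltb⟩
        · rcases lt_or_gt_of_ne hA with hlta | hgta
          · exact Or.inr ⟨hgtb, hlta⟩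
          · exfalso
            have t1 : a^2*l1^2/(a-σ)^3 < 0 :=
              div_neg_of_pos_of_neg (by positivity) (Odd.pow_neg ⟨1, by norm_num⟩ (by linarith))
            have t2 : b^2*l2^2/(b-σ)^3 < 0 :=
              div_neg_of_pos_of_neg (by positivity) (Odd.pow_neg ⟨1, by norm_num⟩ (by linarith))
            have t3 : c^2*l3^2/(c-σ)^3 < 0 :=
              div_neg_of_pos_of_neg (by positivity) (Odd.pow_neg ⟨1, by norm_num⟩ (by linarith))
            have hneg : Fg a b c l1 l2 l3 σ < 0 := by unfold Fg; linarith
            exact hneg.ne hF0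
    rcases hloc with hin | hin
    · exact Or.inl (mono1.injOn hin hσ₁mem (by rw [hF0, hF1]))
    · exact Or.inr (mono2.injOn hin hσ₂mem (by rw [hF0, hF2]))
  · rintro (rfl | rfl)
    · exact ⟨hσ₁a, hσ₁b, hσ₁c, by rw [hh' σ hσ₁a hσ₁b hσ₁c, hF1, mul_zero],
        by rw [hk' σ hσ₁a hσ₁b hσ₁c, hF1, mul_zero]⟩
    · exact ⟨hσ₂a, hσ₂b, hσ₂c, by rw [hh' σ hσ₂a hσ₂b hσ₂c, hF2, mul_zero],
        by rw [hk' σ hσ₂a hσ₂b hσ₂c, hF2, mul_zero]⟩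
end

section
/- Let A₁, A₂, A₃ > 0 and g ∈ ℝ, and write A·v = (A₁v₁, A₂v₂, A₃v₃) for v ∈ ℝ³. Then the map (ν, ξ) ↦ (ν, ω) with ω = (ξ × (A·ν) + g·ν)/((A·ν)·ν) is a well-defined bijection from the set T = {(ν, ξ) ∈ ℝ³ × ℝ³ : ν₁² + ν₂² + ν₃² = 1 and ν·ξ = 0} onto the set G_g = {(ν, ω) ∈ ℝ³ × ℝ³ : ν₁² + ν₂² + ν₃² = 1 and (A·ω)·ν = g}, and its inverse is given by (ν, ω) ↦ (ν, ν × ω). (Here × is the cross product and · the dot product on ℝ³; well-definedness uses that (A·ν)·ν > 0 for unit ν.) -/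
/-- The Kolosov substitution: `(ν, ξ) ↦ (ν, ω)` with
`ω = (ξ × Aν + g ν)/(Aν · ν)` is a bijection from the tangent bundle of the
Poisson sphere `T = {(ν, ξ) : |ν| = 1, ν·ξ = 0}` onto the level set
`G_g = {(ν, ω) : |ν| = 1, Aω·ν = g}` of the area integral, with inverse
`(ν, ω) ↦ (ν, ν × ω)`. -/
theorem stmt8 (A₁ A₂ A₃ g : ℝ) (hA₁ : 0 < A₁) (hA₂ : 0 < A₂) (hA₃ : 0 < A₃) :
    let Amul : (Fin 3 → ℝ) → (Fin 3 → ℝ) := fun v => ![A₁ * v 0, A₂ * v 1, A₃ * v 2]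
    let T : Set ((Fin 3 → ℝ) × (Fin 3 → ℝ)) :=
      {p | p.1 0 ^ 2 + p.1 1 ^ 2 + p.1 2 ^ 2 = 1 ∧
           p.1 0 * p.2 0 + p.1 1 * p.2 1 + p.1 2 * p.2 2 = 0}
    let Gg : Set ((Fin 3 → ℝ) × (Fin 3 → ℝ)) :=
      {p | p.1 0 ^ 2 + p.1 1 ^ 2 + p.1 2 ^ 2 = 1 ∧
           A₁ * p.2 0 * p.1 0 + A₂ * p.2 1 * p.1 1 + A₃ * p.2 2 * p.1 2 = g}
    let Φ : (Fin 3 → ℝ) × (Fin 3 → ℝ) → (Fin 3 → ℝ) × (Fin 3 → ℝ) :=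
      fun p => (p.1, (A₁ * p.1 0 ^ 2 + A₂ * p.1 1 ^ 2 + A₃ * p.1 2 ^ 2)⁻¹ •
        (crossProduct p.2 (Amul p.1) + g • p.1))
    let Ψ : (Fin 3 → ℝ) × (Fin 3 → ℝ) → (Fin 3 → ℝ) × (Fin 3 → ℝ) :=
      fun p => (p.1, crossProduct p.1 p.2)
    Set.BijOn Φ T Gg ∧ Set.InvOn Ψ Φ T Gg := by
  intro Amul T Gg Φ Ψ
  have hd : ∀ ν : Fin 3 → ℝ, ν 0 ^ 2 + ν 1 ^ 2 + ν 2 ^ 2 = 1 →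
      A₁ * ν 0 ^ 2 + A₂ * ν 1 ^ 2 + A₃ * ν 2 ^ 2 ≠ 0 := by
    intro ν hν
    intro h
    have h1 : 0 ≤ A₁ * ν 0 ^ 2 := mul_nonneg hA₁.le (sq_nonneg _)
    have h2 : 0 ≤ A₂ * ν 1 ^ 2 := mul_nonneg hA₂.le (sq_nonneg _)
    have h3 : 0 ≤ A₃ * ν 2 ^ 2 := mul_nonneg hA₃.le (sq_nonneg _)
    have e1 : A₁ * ν 0 ^ 2 = 0 := by linarith
    have e2 : A₂ * ν 1 ^ 2 = 0 := by linarith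
    have e3 : A₃ * ν 2 ^ 2 = 0 := by linarith
    have s1 : ν 0 ^ 2 = 0 := by
      rcases mul_eq_zero.mp e1 with h' | h'
      · exact absurd h' hA₁.ne'
      · exact h'
    have s2 : ν 1 ^ 2 = 0 := by
      rcases mul_eq_zero.mp e2 with h' | h'
      · exact absurd h' hA₂.ne'
      · exact h'
    have s3 : ν 2 ^ 2 = 0 := by
      rcases mul_eq_zero.mp e3 with h' | h'
      · exact absurd h' hA₃.ne'
      · exact h'
    rw [s1, s2, s3] at hν
    norm_num at hν
  have hmt : Set.MapsTo Φ T Gg := by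
    rintro ⟨ν, ξ⟩ ⟨hν, hξ⟩
    refine ⟨hν, ?_⟩
    have hd' := hd ν hν
    simp only [Φ, Amul, cross_apply, Pi.smul_apply, Pi.add_apply, smul_eq_mul,
      Matrix.cons_val_zero, Matrix.cons_val_one, Matrix.head_cons, Matrix.cons_val_two,
      Matrix.tail_cons]
    field_simp
    ring
  have hmg : Set.MapsTo Ψ Gg T := by
    rintro ⟨ν, ω⟩ ⟨hν, hω⟩
    refine ⟨hν, ?_⟩
    simp only [Ψ, cross_apply, Matrix.cons_val_zero, Matrix.cons_val_one, Matrix.head_cons,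
      Matrix.cons_val_two, Matrix.tail_cons]
    ring
  have hleft : Set.LeftInvOn Ψ Φ T := by
    rintro ⟨ν, ξ⟩ ⟨hν, hξ⟩
    have hd' := hd ν hν
    simp only [Ψ, Φ, Amul, Prod.mk.injEq, true_and]
    funext i
    fin_cases i
    · simp only [cross_apply, Pi.smul_apply, Pi.add_apply, smul_eq_mul,
        Matrix.cons_val_zero, Matrix.cons_val_one, Matrix.head_cons, Matrix.cons_val_two,
        Matrix.tail_cons, Fin.isValue, Fin.reduceFinMk]
      field_simp
      rw [div_eq_iff (by convert hd' using 1; ring)]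
      linear_combination (-(A₁ * ν 0)) * hξ
    · simp only [cross_apply, Pi.smul_apply, Pi.add_apply, smul_eq_mul,
        Matrix.cons_val_zero, Matrix.cons_val_one, Matrix.head_cons, Matrix.cons_val_two,
        Matrix.tail_cons, Fin.isValue, Fin.reduceFinMk]
      field_simp
      rw [div_eq_iff (by convert hd' using 1; ring)]
      linear_combination (-(A₂ * ν 1)) * hξ
    · simp only [cross_apply, Pi.smul_apply, Pi.add_apply, smul_eq_mul,
        Matrix.cons_val_zero, Matrix.cons_val_one, Matrix.head_cons, Matrix.cons_val_two,
        Matrix.tail_cons, Fin.isValue, Fin.reduceFinMk]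
      field_simp
      rw [div_eq_iff (by convert hd' using 1; ring)]
      linear_combination (-(A₃ * ν 2)) * hξ
  have hright : Set.RightInvOn Ψ Φ Gg := by
    rintro ⟨ν, ω⟩ ⟨hν, hω⟩
    have hd' := hd ν hν
    simp only [Ψ, Φ, Amul, Prod.mk.injEq, true_and]
    funext i
    fin_cases i
    · simp only [cross_apply, Pi.smul_apply, Pi.add_apply, smul_eq_mul,
        Matrix.cons_val_zero, Matrix.cons_val_one, Matrix.head_cons, Matrix.cons_val_two,
        Matrix.tail_cons, Fin.isValue, Fin.reduceFinMk]
      field_simp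
      linear_combination (-(ν 0)) * hω
    · simp only [cross_apply, Pi.smul_apply, Pi.add_apply, smul_eq_mul,
        Matrix.cons_val_zero, Matrix.cons_val_one, Matrix.head_cons, Matrix.cons_val_two,
        Matrix.tail_cons, Fin.isValue, Fin.reduceFinMk]
      field_simp
      linear_combination (-(ν 1)) * hω
    · simp only [cross_apply, Pi.smul_apply, Pi.add_apply, smul_eq_mul,
        Matrix.cons_val_zero, Matrix.cons_val_one, Matrix.head_cons, Matrix.cons_val_two,
        Matrix.tail_cons, Fin.isValue, Fin.reduceFinMk]
      field_simp
      linear_combination (-(ν 2)) * hω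
  have hinv : Set.InvOn Ψ Φ T Gg := ⟨hleft, hright⟩
  exact ⟨hinv.bijOn hmt hmg, hinv⟩
end

section
/- For λ ∈ ℝ consider the quartic q(x) = (x + λ)(3x − λ)³ + 16. Then: (a) q has a real root if and only if λ² ≥ 4/3; (b) if λ² = 4/3 then x = −2λ/3 is the unique real root of q; (c) if λ² > 4/3 then q has exactly two distinct real roots; (d) if 4/3 < λ² < 4 then both real roots x satisfy x(x + λ) < 0; (e) if λ² = 4 then x = 0 is a root of q; (f) if λ² > 4 then exactly one of the two real roots satisfies x(x + λ) ≤ 0. -/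
private lemma Bpos (l u v : ℝ) (hu : 0 ≤ u) (huv : u < v) :
    0 < u^3 + v^3 + u*v*(u+v) + 18*l^2*(u+v) - 8*l*(u^2+u*v+v^2) := by
  have hv : 0 < v := lt_of_le_of_lt hu huv
  have hw : 0 < u + v := by linarith
  rcases le_or_gt (4*l) (u+v) with h | h
  · rcases eq_or_ne (u+v) (6*l) with h6 | h6
    · have hl : 0 < l := by nlinarith
      have h2 : 0 < (u - v)^2 := by
        have : u - v ≠ 0 := by intro e; apply absurd huv; simp [show u = v by linarith]
        positivity
      nlinarith [mul_nonneg hw.le (sq_nonneg (u+v-6*l)),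
        mul_pos (show (0:ℝ) < u+v-4*l by nlinarith) h2]
    · have h2 : 0 < (u+v-6*l)^2 := by
        have : u+v-6*l ≠ 0 := by intro e; apply h6; linarith
        positivity
      nlinarith [mul_pos hw h2,
        mul_nonneg (show (0:ℝ) ≤ u+v-4*l by linarith) (sq_nonneg (u-v))]
  · have hl : 0 < l := by nlinarith
    nlinarith [mul_nonneg (mul_nonneg hu hv.le) (show (0:ℝ) ≤ 4*l-(u+v) by linarith),
      mul_nonneg hw.le (sq_nonneg (u+v-4*l)), mul_pos (mul_pos hl hl) hw]

private lemma qmono (l a b : ℝ) (ha : -(2*l)/3 ≤ a) (hab : a < b) :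
    (a + l) * (3*a - l)^3 + 16 < (b + l) * (3*b - l)^3 + 16 := by
  have hu : 0 ≤ 3*a + 2*l := by linarith
  have huv : 3*a + 2*l < 3*b + 2*l := by linarith
  have hB := Bpos l (3*a+2*l) (3*b+2*l) hu huv
  nlinarith [mul_pos (show (0:ℝ) < (3*b+2*l) - (3*a+2*l) by linarith) hB]

private lemma qanti (l a b : ℝ) (hab : a < b) (hb : b ≤ -(2*l)/3) :
    (b + l) * (3*b - l)^3 + 16 < (a + l) * (3*a - l)^3 + 16 := by
  have h := qmono (-l) (-b) (-a) (by linarith) (by linarith)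
  have e1 : (-b + -l) * (3*(-b) - -l)^3 + 16 = (b + l) * (3*b - l)^3 + 16 := by ring
  have e2 : (-a + -l) * (3*(-a) - -l)^3 + 16 = (a + l) * (3*a - l)^3 + 16 := by ring
  linarith [h, e1.ge, e2.le]

private lemma qivt (l a b : ℝ) (ha : (a + l) * (3*a - l)^3 + 16 ≤ 0)
    (hb : 0 ≤ (b + l) * (3*b - l)^3 + 16) :
    ∃ x ∈ Set.uIcc a b, (x + l) * (3*x - l)^3 + 16 = 0 := by
  have hc : ContinuousOn (fun x : ℝ => (x + l) * (3*x - l)^3 + 16) (Set.uIcc a b) := by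
    fun_prop
  have h0 : (0:ℝ) ∈ Set.uIcc ((a + l) * (3*a - l)^3 + 16) ((b + l) * (3*b - l)^3 + 16) :=
    Set.mem_uIcc.mpr (Or.inl ⟨ha, hb⟩)
  obtain ⟨x, hx, hx0⟩ := intermediate_value_uIcc hc h0
  exact ⟨x, hx, hx0⟩

/-- Root analysis of the quartic `q(x) = (x + λ)(3x − λ)³ + 16` determining the
uniform rotations of the Chaplygin–Sretensky gyrostat. -/
theorem stmt9 (l : ℝ) :
    let q : ℝ → ℝ := fun x => (x + l) * (3*x - l)^3 + 16
    ((∃ x : ℝ, q x = 0) ↔ 4/3 ≤ l^2) ∧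
    (l^2 = 4/3 → ∀ x : ℝ, q x = 0 ↔ x = -(2*l)/3) ∧
    (4/3 < l^2 → ∃ x y : ℝ, x ≠ y ∧ q x = 0 ∧ q y = 0 ∧
      ∀ z : ℝ, q z = 0 → z = x ∨ z = y) ∧
    (4/3 < l^2 → l^2 < 4 → ∀ x : ℝ, q x = 0 → x * (x + l) < 0) ∧
    (l^2 = 4 → q 0 = 0) ∧
    (4 < l^2 → ∃! x : ℝ, q x = 0 ∧ x * (x + l) ≤ 0) := by
  intro q
  have hq : ∀ x, q x = (x + l) * (3*x - l)^3 + 16 := fun _ => rfl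
  have hv0 : q (-(2*l)/3) = 16 - 9*l^4 := by simp only [hq]; ring
  have hv1 : q (-(4*l)/3) = 125/3*l^4 + 16 := by simp only [hq]; ring
  have hv2 : q (l/3) = 16 := by simp only [hq]; ring
  have hv3 : q 0 = 16 - l^4 := by simp only [hq]; ring
  have hv4 : q (-l) = 16 := by simp only [hq]; ring
  have QM : ∀ a b : ℝ, -(2*l)/3 ≤ a → a < b → q a < q b := by
    intro a b h1 h2; simp only [hq]; exact qmono l a b h1 h2
  have QA : ∀ a b : ℝ, a < b → b ≤ -(2*l)/3 → q b < q a := by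
    intro a b h1 h2; simp only [hq]; exact qanti l a b h1 h2
  have uniqL : ∀ z w : ℝ, q z = 0 → q w = 0 → z ≤ -(2*l)/3 → w ≤ -(2*l)/3 → z = w := by
    intro z w hz hw hz' hw'
    by_contra hne
    rcases lt_or_gt_of_ne hne with h' | h'
    · have := QA z w h' hw'; rw [hz, hw] at this; exact absurd this (lt_irrefl 0)
    · have := QA w z h' hz'; rw [hz, hw] at this; exact absurd this (lt_irrefl 0)
  have uniqR : ∀ z w : ℝ, q z = 0 → q w = 0 → -(2*l)/3 ≤ z → -(2*l)/3 ≤ w → z = w := by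
    intro z w hz hw hz' hw'
    by_contra hne
    rcases lt_or_gt_of_ne hne with h' | h'
    · have := QM z w hz' h'; rw [hz, hw] at this; exact absurd this (lt_irrefl 0)
    · have := QM w z hw' h'; rw [hz, hw] at this; exact absurd this (lt_irrefl 0)
  have IVT : ∀ a b : ℝ, q a ≤ 0 → 0 ≤ q b → ∃ x ∈ Set.uIcc a b, q x = 0 := by
    intro a b ha hb
    simp only [hq] at ha hb ⊢
    exact qivt l a b ha hb
  refine ⟨?_, ?_, ?_, ?_, ?_, ?_⟩
  · -- (a)
    constructor
    · rintro ⟨x, hx⟩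
      simp only [hq] at hx
      nlinarith [mul_nonneg (sq_nonneg (3*x+2*l))
        (by positivity : (0:ℝ) ≤ (3*x-2*l)^2 + 2*l^2), sq_nonneg l, sq_nonneg (l^2)]
    · intro h
      have h0 : q (-(2*l)/3) ≤ 0 := by rw [hv0]; nlinarith [sq_nonneg l]
      have h1 : (0:ℝ) ≤ q (l/3) := by rw [hv2]; norm_num
      obtain ⟨x, _, hx⟩ := IVT _ _ h0 h1
      exact ⟨x, hx⟩
  · -- (b)
    intro h x
    have h4 : l^4 = 16/9 := by rw [show l^4 = (l^2)^2 by ring, h]; norm_num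
    constructor
    · intro hx
      simp only [hq] at hx
      have key : (3*x+2*l)^2 * ((3*x-2*l)^2 + 2*l^2) = 0 := by
        linear_combination 3*hx + 27*h4
      have h2 : 0 < (3*x-2*l)^2 + 2*l^2 := by nlinarith [sq_nonneg (3*x-2*l)]
      have h3 : (3*x+2*l)^2 = 0 := by
        rcases mul_eq_zero.mp key with h' | h'
        · exact h'
        · linarith
      have := sq_eq_zero_iff.mp h3
      linarith
    · intro hx
      subst hx
      rw [hv0]; linarith
  · -- (c)
    intro h
    have hl0 : l ≠ 0 := by intro h0; rw [h0] at h; norm_num at h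
    have hlt : q (-(2*l)/3) < 0 := by rw [hv0]; nlinarith [sq_nonneg l]
    have hA : (0:ℝ) ≤ q (-(4*l)/3) := by rw [hv1]; nlinarith [sq_nonneg (l^2)]
    have hB : (0:ℝ) ≤ q (l/3) := by rw [hv2]; norm_num
    obtain ⟨x, hxm, hx⟩ := IVT _ _ hlt.le hA
    obtain ⟨y, hym, hy⟩ := IVT _ _ hlt.le hB
    have hxne : x ≠ -(2*l)/3 := by intro e; rw [e] at hx; linarith
    have hyne : y ≠ -(2*l)/3 := by intro e; rw [e] at hy; linarith
    have main : ∀ a b : ℝ, q a = 0 → q b = 0 → a < -(2*l)/3 → -(2*l)/3 < b →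
        ∃ x y : ℝ, x ≠ y ∧ q x = 0 ∧ q y = 0 ∧ ∀ z : ℝ, q z = 0 → z = x ∨ z = y := by
      intro a b ha hb ha' hb'
      refine ⟨a, b, by intro e; rw [e] at ha'; linarith, ha, hb, fun z hz => ?_⟩
      rcases lt_trichotomy z (-(2*l)/3) with h' | h' | h'
      · exact Or.inl (uniqL z a hz ha h'.le ha'.le)
      · exfalso; rw [h'] at hz; linarith
      · exact Or.inr (uniqR z b hz hb h'.le hb'.le)
    rcases hl0.lt_or_gt with hl | hl
    · -- l < 0 : x is on the right branch, y on the left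
      have hxr : -(2*l)/3 < x := by
        rcases Set.mem_uIcc.mp hxm with ⟨h1, h2⟩ | ⟨h1, h2⟩
        · exact lt_of_le_of_ne h1 (Ne.symm hxne)
        · exfalso; linarith
      have hyl : y < -(2*l)/3 := by
        rcases Set.mem_uIcc.mp hym with ⟨h1, h2⟩ | ⟨h1, h2⟩
        · exfalso; linarith
        · exact lt_of_le_of_ne h2 hyne
      exact main y x hy hx hyl hxr
    · -- 0 < l : x on the left branch, y on the right
      have hxl : x < -(2*l)/3 := by
        rcases Set.mem_uIcc.mp hxm with ⟨h1, h2⟩ | ⟨h1, h2⟩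
        · exfalso; linarith
        · exact lt_of_le_of_ne h2 hxne
      have hyr : -(2*l)/3 < y := by
        rcases Set.mem_uIcc.mp hym with ⟨h1, h2⟩ | ⟨h1, h2⟩
        · exact lt_of_le_of_ne h1 (Ne.symm hyne)
        · exfalso; linarith
      exact main x y hx hy hxl hyr
  · -- (d)
    intro h h4 x hx
    have hl0 : l ≠ 0 := by intro h0; rw [h0] at h; norm_num at h
    have hl4 : l^4 < 16 := by nlinarith [sq_nonneg l]
    have hx0 : x ≠ 0 := by intro e; rw [e, hv3] at hx; linarith
    have hxl : x ≠ -l := by intro e; rw [e, hv4] at hx; norm_num at hx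
    rcases hl0.lt_or_gt with hl | hl
    · -- l < 0 : show 0 < x < -l
      have h1 : 0 < x := by
        by_contra hc; push_neg at hc
        have hc' : x < 0 := lt_of_le_of_ne hc hx0
        have := QA x 0 hc' (by linarith)
        rw [hx, hv3] at this; linarith
      have h2 : x < -l := by
        by_contra hc; push_neg at hc
        have hc' : -l < x := lt_of_le_of_ne hc (Ne.symm hxl)
        have := QM (-l) x (by linarith) hc'
        rw [hx, hv4] at this; linarith
      have : x + l < 0 := by linarith
      exact mul_neg_of_pos_of_neg h1 this
    · -- 0 < l : show -l < x < 0
      have h1 : -l < x := by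
        by_contra hc; push_neg at hc
        have hc' : x < -l := lt_of_le_of_ne hc hxl
        have := QA x (-l) hc' (by linarith)
        rw [hx, hv4] at this; linarith
      have h2 : x < 0 := by
        by_contra hc; push_neg at hc
        have hc' : 0 < x := lt_of_le_of_ne hc (Ne.symm hx0)
        have := QM 0 x (by linarith) hc'
        rw [hx, hv3] at this; linarith
      have : 0 < x + l := by linarith
      exact mul_neg_of_neg_of_pos h2 this
  · -- (e)
    intro h
    rw [hv3]
    linear_combination (-(l^2)-4)*h
  · -- (f)
    intro h
    have hl0 : l ≠ 0 := by intro h0; rw [h0] at h; norm_num at h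
    have hl4 : 16 < l^4 := by nlinarith [sq_nonneg l]
    have hlt : q (-(2*l)/3) < 0 := by rw [hv0]; linarith
    have hq0 : q 0 < 0 := by rw [hv3]; linarith
    have hA : (0:ℝ) ≤ q (-(4*l)/3) := by rw [hv1]; nlinarith [sq_nonneg (l^2)]
    obtain ⟨x, hxm, hx⟩ := IVT _ _ hlt.le hA
    have hxne : x ≠ -(2*l)/3 := by intro e; rw [e] at hx; linarith
    have hx0ne : x ≠ -l := by intro e; rw [e, hv4] at hx; norm_num at hx
    rcases hl0.lt_or_gt with hl | hl
    · -- l < 0 : root x with x0 < x < -l, so x > 0, x + l < 0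
      have hxr : -(2*l)/3 < x := by
        rcases Set.mem_uIcc.mp hxm with ⟨h1, h2⟩ | ⟨h1, h2⟩
        · exact lt_of_le_of_ne h1 (Ne.symm hxne)
        · exfalso; linarith
      have h2 : x < -l := by
        by_contra hc; push_neg at hc
        have hc' : -l < x := lt_of_le_of_ne hc (Ne.symm hx0ne)
        have := QM (-l) x (by linarith) hc'
        rw [hx, hv4] at this; linarith
      have hxp : 0 < x := by linarith
      have hcond : x * (x + l) ≤ 0 := (mul_neg_of_pos_of_neg hxp (by linarith)).le
      refine ⟨x, ⟨hx, hcond⟩, ?_⟩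
      rintro z ⟨hz, hzc⟩
      rcases lt_trichotomy z (-(2*l)/3) with h' | h' | h'
      · exfalso
        have hz0 : z ≠ 0 := by intro e; rw [e] at hz; linarith
        rcases lt_or_gt_of_ne hz0 with hzn | hzp
        · -- z < 0 : z*(z+l) > 0
          have : 0 < z * (z + l) := mul_pos_of_neg_of_neg hzn (by linarith)
          linarith
        · -- 0 < z < x0 : q decreasing there, compare with 0
          have := QA 0 z hzp h'.le
          rw [hz, hv3] at this; linarith
      · exfalso; rw [h'] at hz; linarith
      · exact uniqR z x hz hx h'.le hxr.le
    · -- 0 < l : root x with -l < x < x0 < 0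
      have hxl : x < -(2*l)/3 := by
        rcases Set.mem_uIcc.mp hxm with ⟨h1, h2⟩ | ⟨h1, h2⟩
        · exfalso; linarith
        · exact lt_of_le_of_ne h2 hxne
      have h2 : -l < x := by
        by_contra hc; push_neg at hc
        have hc' : x < -l := lt_of_le_of_ne hc hx0ne
        have := QA x (-l) hc' (by linarith)
        rw [hx, hv4] at this; linarith
      have hxn : x < 0 := by linarith
      have hcond : x * (x + l) ≤ 0 := (mul_neg_of_neg_of_pos hxn (by linarith)).le
      refine ⟨x, ⟨hx, hcond⟩, ?_⟩
      rintro z ⟨hz, hzc⟩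
      rcases lt_trichotomy z (-(2*l)/3) with h' | h' | h'
      · exact uniqL z x hz hx h'.le hxl.le
      · exfalso; rw [h'] at hz; linarith
      · exfalso
        have hz0 : z ≠ 0 := by intro e; rw [e] at hz; linarith
        rcases lt_or_gt_of_ne hz0 with hzn | hzp
        · have := QM z 0 h'.le hzn
          rw [hz, hv3] at this; linarith
        · have : 0 < z * (z + l) := mul_pos hzp (by linarith)
          linarith
end

section
/- Fix λ ∈ ℝ. Let (ω, ν) ∈ ℝ³ × ℝ³ satisfy ν₁² + ν₂² + ν₃² = 1 and 4(ω₁ν₁ + ω₂ν₂) + (ω₃ + λ)ν₃ = 0. Then (ω, ν) is an equilibrium of the Chaplygin–Sretensky system (i.e., the right-hand sides of all six equations vanish at (ω, ν)) if and only if one of the following holds: (A) ω = 0, ν₂ = ν₃ = 0 and ν₁ = ±1; or (B) ω₂ = 0, ν₂ = 0, (3ω₃ − λ)ω₁ + ν₃ = 0, ν₁ = (1/4)(3ω₃ − λ)(ω₃ + λ), 4ν₃² = −ω₃(ω₃ + λ)(3ω₃ − λ)², and (ω₃ + λ)(3ω₃ − λ)³ + 16 = 0. -/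
/-- Classification of the equilibria of the Chaplygin–Sretensky system on the
level `{Γ = 1, G = 0}`: a point is an equilibrium iff it is one of the two
equilibrium positions of the body (A), or a uniform rotation (B). -/
theorem stmt10 (l : ℝ) (ω ν : Fin 3 → ℝ)
    (hunit : ν 0 ^ 2 + ν 1 ^ 2 + ν 2 ^ 2 = 1)
    (hG : 4 * (ω 0 * ν 0 + ω 1 * ν 1) + (ω 2 + l) * ν 2 = 0) :
    (3 * ω 1 * ω 2 - l * ω 1 = 0 ∧
     -(3 * ω 2 * ω 0) + l * ω 0 - ν 2 = 0 ∧
     ν 1 = 0 ∧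
     ν 1 * ω 2 - ν 2 * ω 1 = 0 ∧
     ν 2 * ω 0 - ν 0 * ω 2 = 0 ∧
     ν 0 * ω 1 - ν 1 * ω 0 = 0) ↔
    ((ω 0 = 0 ∧ ω 1 = 0 ∧ ω 2 = 0 ∧ ν 1 = 0 ∧ ν 2 = 0 ∧ (ν 0 = 1 ∨ ν 0 = -1)) ∨
     (ω 1 = 0 ∧ ν 1 = 0 ∧
      (3 * ω 2 - l) * ω 0 + ν 2 = 0 ∧
      ν 0 = (1/4) * (3 * ω 2 - l) * (ω 2 + l) ∧
      4 * ν 2 ^ 2 = -(ω 2 * (ω 2 + l) * (3 * ω 2 - l)^2) ∧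
      (ω 2 + l) * (3 * ω 2 - l)^3 + 16 = 0)) := by
  constructor
  · rintro ⟨e1, e2, e3, e4, e5, e6⟩
    -- first: ω 1 = 0
    have hb : ω 1 = 0 := by
      by_contra hb
      have h1 : ω 1 * (3 * ω 2 - l) = 0 := by linear_combination e1
      have hc : 3 * ω 2 - l = 0 := (mul_eq_zero.mp h1).resolve_left hb
      have h2 : ν 2 * ω 1 = 0 := by linear_combination -e4 + ω 2 * e3
      have hr : ν 2 = 0 := (mul_eq_zero.mp h2).resolve_right hb
      have h3 : ν 0 * ω 1 = 0 := by linear_combination e6 + ω 0 * e3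
      have hp : ν 0 = 0 := (mul_eq_zero.mp h3).resolve_right hb
      rw [hp, hr, e3] at hunit; norm_num at hunit
    by_cases hc : ω 2 = 0
    · -- case ω 2 = 0
      by_cases ha : ω 0 = 0
      · left
        have hr : ν 2 = 0 := by rw [ha, hc] at e2; linarith
        refine ⟨ha, hb, hc, e3, hr, ?_⟩
        have hp2 : ν 0 * ν 0 = 1 := by rw [e3, hr] at hunit; nlinarith [hunit]
        exact mul_self_eq_one_iff.mp hp2
      · exfalso
        have h2 : ν 2 * ω 0 = 0 := by linear_combination e5 + ν 0 * hc
        have hr : ν 2 = 0 := (mul_eq_zero.mp h2).resolve_right ha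
        have h3 : l * ω 0 = 0 := by rw [hc, hr] at e2; linarith
        have hl : l = 0 := (mul_eq_zero.mp h3).resolve_right ha
        have h4 : ω 0 * ν 0 = 0 := by
          have : 4 * (ω 0 * ν 0) = 0 := by
            rw [e3, hr] at hG; linarith
          linarith
        have hp : ν 0 = 0 := (mul_eq_zero.mp h4).resolve_left ha
        rw [hp, hr, e3] at hunit; norm_num at hunit
    · -- case ω 2 ≠ 0 : type (B)
      right
      have hr : ν 2 ≠ 0 := by
        intro hr0
        have h2 : ν 0 * ω 2 = 0 := by linear_combination -e5 + ω 0 * hr0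
        have hp : ν 0 = 0 := (mul_eq_zero.mp h2).resolve_right hc
        rw [hp, hr0, e3] at hunit; norm_num at hunit
      have hprod : (3 * ω 2 - l) * ω 0 = -ν 2 := by linear_combination -e2
      have ha : ω 0 ≠ 0 := by
        intro h; apply hr; rw [h, mul_zero] at hprod; linarith
      have hk : 3 * ω 2 - l ≠ 0 := by
        intro h; apply hr; rw [h, zero_mul] at hprod; linarith
      have h1 : ν 2 * (4 * ω 0 ^ 2 + ω 2 * (ω 2 + l)) = 0 := by
        linear_combination ω 2 * hG + 4 * ω 0 * e5 - 4 * ω 1 * ω 2 * e3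
      have key : 4 * ω 0 ^ 2 + ω 2 * (ω 2 + l) = 0 :=
        (mul_eq_zero.mp h1).resolve_left hr
      have hr2 : ν 2 = (l - 3 * ω 2) * ω 0 := by linear_combination -e2
      have hp : ν 0 = 1/4 * (3 * ω 2 - l) * (ω 2 + l) := by
        have h2 : (ν 0 - 1/4 * (3 * ω 2 - l) * (ω 2 + l)) * ω 2 = 0 := by
          linear_combination -e5 - ω 0 * e2 - ((3 * ω 2 - l)/4) * key
        rcases mul_eq_zero.mp h2 with h | h
        · linarith
        · exact absurd h hc
      refine ⟨hb, e3, by linear_combination -e2, hp, ?_, ?_⟩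
      · rw [hr2]; linear_combination (3 * ω 2 - l) ^ 2 * key
      · rw [hp, hr2, e3] at hunit
        linear_combination (-16 : ℝ) * hunit + 4 * (3 * ω 2 - l) ^ 2 * key
  · rintro (⟨h1, h2, h3, h4, h5, h6⟩ | ⟨h1, h2, h3, h4, h5, h6⟩)
    · refine ⟨?_, ?_, h4, ?_, ?_, ?_⟩ <;> simp [h1, h2, h3, h4, h5]
    · have hk : (3 * ω 2 - l) ≠ 0 := by
        intro h; rw [h] at h6; norm_num at h6
      have h7 : (3 * ω 2 - l) ^ 2 * (4 * ω 0 ^ 2 + ω 2 * (ω 2 + l)) = 0 := by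
        linear_combination h5 - 4 * (ν 2 - (3 * ω 2 - l) * ω 0) * h3
      have key : 4 * ω 0 ^ 2 + ω 2 * (ω 2 + l) = 0 :=
        (mul_eq_zero.mp h7).resolve_left (pow_ne_zero 2 hk)
      refine ⟨?_, ?_, h2, ?_, ?_, ?_⟩
      · linear_combination (3 * ω 2 - l) * h1
      · linear_combination -h3
      · linear_combination ω 2 * h2 - ν 2 * h1
      · linear_combination ω 0 * h3 - ω 2 * h4 - ((3 * ω 2 - l)/4) * key
      · linear_combination ν 0 * h1 - ω 0 * h2
end

section
/- Fix λ ∈ ℝ. Define two parametrized curves in ℝ² by Bif(σ) = ((3/2)σ² − 2λσ + λ²/2 − 1, −σ³ + λσ²) and Bif*(σ*) = ((3/2)σ*² − 2λσ* + λ²/2 + 1, −σ*³ + λσ*²) for σ, σ* ∈ ℝ. Then the images of Bif and Bif* intersect (i.e., there exist σ, σ* ∈ ℝ with Bif(σ) = Bif*(σ*)) if and only if λ² ≥ 4/3; moreover, at every common point, the number τ = σ + σ* − λ satisfies (τ + λ)(3τ − λ)³ + 16 = 0, and the common value equals ((λ² − 4λτ − 3τ²)/4, τ²(τ + λ)). 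-/
/-- The bifurcation curves `Bif` and `Bif*` of the Chaplygin–Sretensky problem
intersect iff `λ² ≥ 4/3`, and every common point corresponds to a uniform
rotation: `τ = σ + σ* − λ` satisfies `(τ + λ)(3τ − λ)³ + 16 = 0` and the common
point equals `((λ² − 4λτ − 3τ²)/4, τ²(τ + λ))`. -/
theorem stmt11 (l : ℝ) :
    let Bif : ℝ → ℝ × ℝ := fun σ =>
      ((3/2) * σ^2 - 2*l*σ + l^2/2 - 1, -σ^3 + l*σ^2)
    let Bifs : ℝ → ℝ × ℝ := fun σ =>
      ((3/2) * σ^2 - 2*l*σ + l^2/2 + 1, -σ^3 + l*σ^2)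
    ((∃ σ σs : ℝ, Bif σ = Bifs σs) ↔ 4/3 ≤ l^2) ∧
    (∀ σ σs : ℝ, Bif σ = Bifs σs →
      ((σ + σs - l) + l) * (3*(σ + σs - l) - l)^3 + 16 = 0 ∧
      Bif σ = ((l^2 - 4*l*(σ + σs - l) - 3*(σ + σs - l)^2)/4,
               (σ + σs - l)^2 * ((σ + σs - l) + l))) := by
  intro Bif Bifs
  have main : ∀ σ σs : ℝ,
      (((3/2) * σ^2 - 2*l*σ + l^2/2 - 1, -σ^3 + l*σ^2) : ℝ × ℝ) =
        ((3/2) * σs^2 - 2*l*σs + l^2/2 + 1, -σs^3 + l*σs^2) →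
      ((σ + σs - l) + l) * (3*(σ + σs - l) - l)^3 + 16 = 0 ∧
      (((3/2) * σ^2 - 2*l*σ + l^2/2 - 1, -σ^3 + l*σ^2) : ℝ × ℝ) =
        ((l^2 - 4*l*(σ + σs - l) - 3*(σ + σs - l)^2)/4,
         (σ + σs - l)^2 * ((σ + σs - l) + l)) := by
    intro σ σs h
    rw [Prod.mk.injEq] at h
    obtain ⟨h1, h2⟩ := h
    have hd : σ ≠ σs := by
      intro he; rw [he] at h1; linarith
    have hsub : σ - σs ≠ 0 := sub_ne_zero.mpr hd
    have key : σ^2 + σ*σs + σs^2 = l*(σ+σs) := by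
      apply mul_left_cancel₀ hsub
      linear_combination -h2
    refine ⟨?_, ?_⟩
    · linear_combination (4*(3*(σ+σs)-4*l)^2) * key -
        (2*((σ-σs)*(3*(σ+σs)-4*l)+4)) * h1
    · rw [Prod.mk.injEq]
      constructor
      · linear_combination (3/2 : ℝ) * key + (1/2 : ℝ) * h1
      · linear_combination ((2*l-3*(σ+σs))/2) * key + (1/2 : ℝ) * h2
  refine ⟨⟨?_, ?_⟩, fun σ σs h => main σ σs h⟩
  · rintro ⟨σ, σs, h⟩
    obtain ⟨hq, -⟩ := main σ σs h
    set τ := σ + σs - l with hτdef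
    have h9 : 16 ≤ 9*l^4 := by
      nlinarith [hq, sq_nonneg ((3*τ+2*l)*(3*τ-2*l)), sq_nonneg ((3*τ+2*l)*l)]
    nlinarith [h9, sq_nonneg l]
  · intro hl
    have hab : -2*l/3 ≤ |l|+1 := by
      have := neg_abs_le l
      have := abs_nonneg l
      linarith
    have hcont : ContinuousOn (fun t : ℝ => (t+l)*(3*t-l)^3+16)
        (Set.Icc (-2*l/3) (|l|+1)) := by fun_prop
    have e1 : (-2*l/3+l)*(3*(-2*l/3)-l)^3+16 ≤ (0:ℝ) := by
      nlinarith [sq_nonneg (l^2-4/3), hl]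
    have e2 : (0:ℝ) ≤ (|l|+1+l)*(3*(|l|+1)-l)^3+16 := by
      have a1 : (0:ℝ) ≤ |l|+1+l := by linarith [neg_abs_le l]
      have a2 : (0:ℝ) ≤ 3*(|l|+1)-l := by linarith [le_abs_self l, abs_nonneg l]
      have := mul_nonneg a1 (pow_nonneg a2 3)
      linarith
    obtain ⟨τ, -, hτ⟩ := intermediate_value_Icc hab hcont ⟨e1, e2⟩
    simp only at hτ
    have ht : (3*τ-l) ≠ 0 := by
      intro h
      rw [h] at hτ
      norm_num at hτ
    set d : ℝ := 4/(3*τ-l) with hddef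
    have hd1 : d*(3*τ-l) = 4 := div_mul_cancel₀ 4 ht
    have hd3 : (τ+l)*(3*τ-l) + d^2 = 0 := by
      have hd2 : d^2*(3*τ-l)^2 = 16 := by linear_combination (d*(3*τ-l)+4)*hd1
      have h3 : ((τ+l)*(3*τ-l) + d^2)*(3*τ-l)^2 = 0 := by
        linear_combination hτ + hd2
      rcases mul_eq_zero.mp h3 with h|h
      · exact h
      · exact absurd h (pow_ne_zero 2 ht)
    refine ⟨((τ+l)+d)/2, ((τ+l)-d)/2, ?_⟩
    show ((3/2) * (((τ+l)+d)/2)^2 - 2*l*(((τ+l)+d)/2) + l^2/2 - 1,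
          -(((τ+l)+d)/2)^3 + l*(((τ+l)+d)/2)^2) =
         ((3/2) * (((τ+l)-d)/2)^2 - 2*l*(((τ+l)-d)/2) + l^2/2 + 1,
          -(((τ+l)-d)/2)^3 + l*(((τ+l)-d)/2)^2)
    rw [Prod.mk.injEq]
    constructor
    · linear_combination (1/2 : ℝ) * hd1
    · linear_combination (-d/4 : ℝ) * hd3
end

section
/- Fix λ ∈ ℝ and let (ω, ν) : ℝ → ℝ³ × ℝ³ be any differentiable solution of the Chaplygin–Sretensky system. Then: (a) the function G = 4(ω₁ν₁ + ω₂ν₂) + (ω₃ + λ)ν₃ is constant along the solution; (b) the derivative along the solution of the Sretensky function K = 2(ω₃ − λ)(ω₁² + ω₂²) + 2ω₁ν₃ satisfies dK/dt = (ω₂/2)·G at every time; in particular, if G vanishes at one time (hence at all times), then K is constant along the solution, i.e., K is a partial first integral on the level set G = 0. -/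
/-- Along any solution of the Chaplygin–Sretensky system, the area integral `G`
is constant, the Sretensky function `K` satisfies `dK/dt = (ω₂/2)·G`, and hence
`K` is a partial first integral on the level `G = 0`. -/
theorem stmt12 (l : ℝ) (ω ν ω' ν' : ℝ → Fin 3 → ℝ)
    (hω : ∀ t i, HasDerivAt (fun s => ω s i) (ω' t i) t)
    (hν : ∀ t i, HasDerivAt (fun s => ν s i) (ν' t i) t)
    (e1 : ∀ t, 4 * ω' t 0 = 3 * ω t 1 * ω t 2 - l * ω t 1)
    (e2 : ∀ t, 4 * ω' t 1 = -(3 * ω t 2 * ω t 0) + l * ω t 0 - ν t 2)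
    (e3 : ∀ t, ω' t 2 = ν t 1)
    (e4 : ∀ t, ν' t 0 = ν t 1 * ω t 2 - ν t 2 * ω t 1)
    (e5 : ∀ t, ν' t 1 = ν t 2 * ω t 0 - ν t 0 * ω t 2)
    (e6 : ∀ t, ν' t 2 = ν t 0 * ω t 1 - ν t 1 * ω t 0) :
    let G : ℝ → ℝ := fun t =>
      4 * (ω t 0 * ν t 0 + ω t 1 * ν t 1) + (ω t 2 + l) * ν t 2
    let K : ℝ → ℝ := fun t =>
      2 * (ω t 2 - l) * (ω t 0 ^ 2 + ω t 1 ^ 2) + 2 * ω t 0 * ν t 2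
    (∀ t s : ℝ, G t = G s) ∧
    (∀ t : ℝ, HasDerivAt K (ω t 1 / 2 * G t) t) ∧
    ((∃ t₀ : ℝ, G t₀ = 0) → ∀ t s : ℝ, K t = K s) := by
  intro G K
  have hG : ∀ t, HasDerivAt G 0 t := by
    intro t
    have h := ((((hω t 0).mul (hν t 0)).add ((hω t 1).mul (hν t 1))).const_mul 4).add
        (((hω t 2).add_const l).mul (hν t 2))
    refine h.congr_deriv (Eq.symm ?_)
    linear_combination (-(ν t 0)) * e1 t + (-(ν t 1)) * e2 t + (-(ν t 2)) * e3 t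
      + (-(4 * ω t 0)) * e4 t + (-(4 * ω t 1)) * e5 t + (-(ω t 2 + l)) * e6 t
  have hGconst : ∀ t s : ℝ, G t = G s :=
    is_const_of_deriv_eq_zero (fun t => (hG t).differentiableAt)
      (fun t => (hG t).deriv)
  have hK : ∀ t : ℝ, HasDerivAt K (ω t 1 / 2 * G t) t := by
    intro t
    have h := ((((hω t 2).sub_const l).const_mul 2).mul
        (((hω t 0).pow 2).add ((hω t 1).pow 2))).add
        (((hω t 0).const_mul 2).mul (hν t 2))
    refine h.congr_deriv (Eq.symm ?_)
    push_cast
    simp only [pow_one, G, Pi.add_apply, Pi.pow_apply]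
    linear_combination (-(ω t 2 - l) * ω t 0 - ν t 2 / 2) * e1 t
      + (-(ω t 2 - l) * ω t 1) * e2 t + (-2 * (ω t 0 ^ 2 + ω t 1 ^ 2)) * e3 t
      + (-2 * ω t 0) * e6 t
  refine ⟨hGconst, hK, ?_⟩
  rintro ⟨t₀, h0⟩
  have hK0 : ∀ t, HasDerivAt K 0 t := by
    intro t
    have := hK t
    rwa [hGconst t t₀, h0, mul_zero] at this
  exact is_const_of_deriv_eq_zero (fun t => (hK0 t).differentiableAt)
    (fun t => (hK0 t).deriv)
end

section
/- Let λ, h ∈ ℝ satisfy λ² − 2 < 2h < 2, set a = √(2(h + 1)), ζ₁ = λ − a < 0, ζ₃ = λ + a > 0, and let W(z) = −(z(z − λ)² − 2(h + 1)z)·(z(z − λ)² − 2(h − 1)z). Call a pair of continuously differentiable functions x, y : ℝ → ℝ a pseudotrajectory if x(τ) ∈ (0, ζ₃] and y(τ) ∈ [ζ₁, 0) for all τ, (x'(τ))² = W(x(τ)) and (y'(τ))² = W(y(τ)) for all τ, x(τ) → 0 and y(τ) → 0 as τ → ±∞, and each of x' and y' vanishes at exactly one value of τ. Then for every pseudotrajectory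 the limits φ₊ = lim_{τ→+∞} y(τ)/x(τ) and φ₋ = lim_{τ→−∞} y(τ)/x(τ) exist and are finite and nonzero, and the product θ = φ₊·φ₋ is the same for all pseudotrajectories (it depends only on λ and h). -/
open Filter Set MeasureTheory intervalIntegral

noncomputable def TT (Q : ℝ → ℝ) (zmax : ℝ) (z : ℝ) : ℝ :=
  ∫ t in z..(zmax/2), (t * Real.sqrt (Q t))⁻¹

noncomputable def AA (Q R : ℝ → ℝ) (zmax μ : ℝ) : ℝ :=
  Real.log (zmax/2) -
    ∫ t in (0:ℝ)..(zmax/2), R t / (Real.sqrt (Q t) * (Real.sqrt (Q t) + μ))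

lemma master (Q R : ℝ → ℝ) (hQ : Continuous Q) (hR : Continuous R)
    (hQR : ∀ z, Q z = Q 0 + z * R z)
    (zmax μ : ℝ) (hzmax : 0 < zmax) (hμ : 0 < μ) (hQ0 : Q 0 = μ^2)
    (hQpos : ∀ z, 0 ≤ z → z < zmax → 0 < Q z)
    (x : ℝ → ℝ) (hx : ContDiff ℝ 1 x) (hmem : ∀ τ, x τ ∈ Set.Ioc 0 zmax)
    (hode : ∀ τ, (deriv x τ)^2 = (x τ)^2 * Q (x τ))
    (τ₀ : ℝ) (hx0 : x τ₀ = zmax)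
    (hneg : ∀ τ, τ₀ < τ → deriv x τ < 0)
    (htop : Tendsto x atTop (nhds 0)) :
    ∃ τ₁, τ₀ < τ₁ ∧
      Tendsto (fun τ => Real.log (x τ) + μ*τ) atTop (nhds (AA Q R zmax μ + μ*τ₁)) ∧
      Tendsto (TT Q zmax) (nhdsWithin zmax (Set.Iio zmax)) (nhds (τ₀ - τ₁)) := by
  classical
  set z₀ : ℝ := zmax/2 with hz₀def
  have hz₀pos : 0 < z₀ := by positivity
  have hz₀lt : z₀ < zmax := by rw [hz₀def]; linarith
  have hz₀mem : z₀ ∈ Set.Ioo 0 zmax := ⟨hz₀pos, hz₀lt⟩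
  have xpos : ∀ τ, 0 < x τ := fun τ => (hmem τ).1
  have xle : ∀ τ, x τ ≤ zmax := fun τ => (hmem τ).2
  have hxc : Continuous x := hx.continuous
  have hd : Differentiable ℝ x := hx.differentiable one_ne_zero
  have step1 : ∀ τ, τ₀ < τ → x τ < zmax := by
    intro τ hτ
    rcases lt_or_eq_of_le (xle τ) with h' | h'
    · exact h'
    · exfalso
      have hmax : IsLocalMax x τ :=
        Filter.Eventually.of_forall (fun b => by rw [h']; exact xle b)
      exact absurd hmax.deriv_eq_zero (ne_of_lt (hneg τ hτ))
  have hQx : ∀ τ, τ₀ < τ → 0 < Q (x τ) := fun τ hτ => hQpos _ (xpos τ).le (step1 τ hτ)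
  have sqrtW : ∀ τ, τ₀ < τ → deriv x τ = -(x τ * Real.sqrt (Q (x τ))) := by
    intro τ hτ
    have hb : 0 < x τ * Real.sqrt (Q (x τ)) :=
      mul_pos (xpos τ) (Real.sqrt_pos.2 (hQx τ hτ))
    have h2 : (deriv x τ)^2 = (x τ * Real.sqrt (Q (x τ)))^2 := by
      rw [hode τ, mul_pow, Real.sq_sqrt (hQx τ hτ).le]
    have h3 : (deriv x τ + x τ * Real.sqrt (Q (x τ))) *
        (deriv x τ - x τ * Real.sqrt (Q (x τ))) = 0 := by linear_combination h2
    rcases mul_eq_zero.1 h3 with h4 | h4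
    · linarith
    · exfalso; have := hneg τ hτ; linarith
  -- choose τ₁
  have hxτ₀ : Tendsto x (nhds τ₀) (nhds zmax) := hx0 ▸ hxc.continuousAt
  obtain ⟨τa, hxτa, hτa⟩ : ∃ τa, z₀ < x τa ∧ τ₀ < τa := by
    have h1 : ∀ᶠ τ in nhds τ₀, z₀ < x τ := hxτ₀.eventually_const_lt hz₀lt
    have h2 : ∀ᶠ τ in nhdsWithin τ₀ (Set.Ioi τ₀), z₀ < x τ :=
      h1.filter_mono nhdsWithin_le_nhds
    exact (h2.and self_mem_nhdsWithin).exists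
  obtain ⟨τb, hxτb, hab⟩ : ∃ τb, x τb < z₀ ∧ τa ≤ τb := by
    have h1 : ∀ᶠ τ in atTop, x τ < z₀ := htop.eventually_lt_const hz₀pos
    exact (h1.and (eventually_ge_atTop τa)).exists
  obtain ⟨τ₁, hτ₁mem, hxτ₁⟩ : ∃ τ₁ ∈ Set.Icc τa τb, x τ₁ = z₀ := by
    have hsub := intermediate_value_Icc' hab (hxc.continuousOn (s := Set.Icc τa τb))
    have : z₀ ∈ Set.Icc (x τb) (x τa) := ⟨hxτb.le, hxτa.le⟩
    obtain ⟨τ₁, hm, he⟩ := hsub this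
    exact ⟨τ₁, hm, he⟩
  have hτ₁ : τ₀ < τ₁ := lt_of_lt_of_le hτa hτ₁mem.1
  -- integrand
  set f : ℝ → ℝ := fun t => (t * Real.sqrt (Q t))⁻¹ with hfdef
  have hfc : ∀ t, 0 < t → t < zmax → ContinuousAt f t := by
    intro t ht htm
    have hne : (t * Real.sqrt (Q t)) ≠ 0 :=
      (mul_pos ht (Real.sqrt_pos.2 (hQpos t ht.le htm))).ne'
    exact (continuousAt_id.mul ((hQ.continuousAt).sqrt)).inv₀ hne
  have hfco : ContinuousOn f (Set.Ioo 0 zmax) := fun t ht =>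
    (hfc t ht.1 ht.2).continuousWithinAt
  have hfi : ∀ u v, u ∈ Set.Ioo 0 zmax → v ∈ Set.Ioo 0 zmax →
      IntervalIntegrable f volume u v := by
    intro u v hu hv
    exact (hfco.mono (Set.ordConnected_Ioo.uIcc_subset hu hv)).intervalIntegrable
  have hmeasf : ∀ z ∈ Set.Ioo 0 zmax, StronglyMeasurableAtFilter f (nhds z) volume :=
    fun z hz => ⟨Set.Ioo 0 zmax, Ioo_mem_nhds hz.1 hz.2,
      hfco.aestronglyMeasurable measurableSet_Ioo⟩
  have hTd : ∀ z ∈ Set.Ioo 0 zmax, HasDerivAt (TT Q zmax) (-(f z)) z := by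
    intro z hz
    exact intervalIntegral.integral_hasDerivAt_left (hfi z z₀ hz hz₀mem)
      (hmeasf z hz) (hfc z hz.1 hz.2)
  have hTxd : ∀ τ, τ₀ < τ → HasDerivAt (fun σ => TT Q zmax (x σ)) 1 τ := by
    intro τ hτ
    have hxm : x τ ∈ Set.Ioo 0 zmax := ⟨xpos τ, step1 τ hτ⟩
    have hcomp := (hTd (x τ) hxm).comp τ (hd τ).hasDerivAt
    have hne : (x τ * Real.sqrt (Q (x τ))) ≠ 0 :=
      (mul_pos (xpos τ) (Real.sqrt_pos.2 (hQx τ hτ))).ne'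
    have hval : -(f (x τ)) * deriv x τ = 1 := by
      rw [sqrtW τ hτ, hfdef]
      simp only []
      field_simp
      exact div_self hne
    rw [hval] at hcomp
    exact hcomp
  have const_of : ∀ (F : ℝ → ℝ) (s t : ℝ), s ≤ t →
      (∀ u ∈ Set.Icc s t, HasDerivAt F 0 u) → F t = F s := by
    intro F s t hst hF
    have hcont : ContinuousOn F (Set.Icc s t) :=
      fun u hu => (hF u hu).continuousAt.continuousWithinAt
    have := constant_of_has_deriv_right_zero hcont
      (fun u hu => (hF u (Set.mem_Icc_of_Ico hu)).hasDerivWithinAt)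
    exact this t (Set.right_mem_Icc.2 hst)
  have hTz₀ : TT Q zmax z₀ = 0 := by
    rw [TT, ← hz₀def, intervalIntegral.integral_same]
  have hTx : ∀ τ, τ₀ < τ → TT Q zmax (x τ) = τ - τ₁ := by
    intro τ hτ
    have key : ∀ s t : ℝ, τ₀ < s → s ≤ t →
        TT Q zmax (x t) - t = TT Q zmax (x s) - s := by
      intro s t hs hst
      refine const_of (fun σ => TT Q zmax (x σ) - σ) s t hst (fun u hu => ?_)
      have hh := ((hTxd u (lt_of_lt_of_le hs hu.1)).sub (hasDerivAt_id u))
      simp only [sub_self] at hh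
      exact hh
    rcases le_total τ τ₁ with h' | h'
    · have := key τ τ₁ hτ h'
      rw [hxτ₁, hTz₀] at this; linarith
    · have := key τ₁ τ hτ₁ h'
      rw [hxτ₁, hTz₀] at this; linarith
  -- the function g
  set g : ℝ → ℝ := fun t => R t / (Real.sqrt (Q t) * (Real.sqrt (Q t) + μ)) with hgdef
  have hgc : ∀ t, 0 ≤ t → t < zmax → ContinuousAt g t := by
    intro t ht htm
    have hs : 0 < Real.sqrt (Q t) := Real.sqrt_pos.2 (hQpos t ht htm)
    have hne : Real.sqrt (Q t) * (Real.sqrt (Q t) + μ) ≠ 0 :=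
      (mul_pos hs (by linarith)).ne'
    exact (hR.continuousAt).div
      ((hQ.continuousAt.sqrt).mul ((hQ.continuousAt.sqrt).add continuousAt_const)) hne
  have hgco : ContinuousOn g (Set.Icc 0 z₀) := fun t ht =>
    (hgc t ht.1 (lt_of_le_of_lt ht.2 hz₀lt)).continuousWithinAt
  have hgco' : ContinuousOn g (Set.Ioo 0 zmax) := fun t ht =>
    (hgc t ht.1.le ht.2).continuousWithinAt
  have hgi : ∀ u v, u ∈ Set.Icc 0 z₀ → v ∈ Set.Icc 0 z₀ →
      IntervalIntegrable g volume u v := by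
    intro u v hu hv
    exact (hgco.mono (Set.ordConnected_Icc.uIcc_subset hu hv)).intervalIntegrable
  have hmeasg : ∀ z ∈ Set.Ioo 0 zmax, StronglyMeasurableAtFilter g (nhds z) volume :=
    fun z hz => ⟨Set.Ioo 0 zmax, Ioo_mem_nhds hz.1 hz.2,
      hgco'.aestronglyMeasurable measurableSet_Ioo⟩
  -- derivative of G
  have hGd : ∀ z ∈ Set.Ioo 0 zmax,
      HasDerivAt (fun w => Real.log w + μ * TT Q zmax w) (z⁻¹ + μ * -(f z)) z := by
    intro z hz
    exact (Real.hasDerivAt_log (ne_of_gt hz.1)).add ((hTd z hz).const_mul μ)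
  have hGg : ∀ z ∈ Set.Ioo 0 zmax, z⁻¹ + μ * -(f z) = g z := by
    intro z hz
    have hQz : 0 < Q z := hQpos z hz.1.le hz.2
    have hs : 0 < Real.sqrt (Q z) := Real.sqrt_pos.2 hQz
    have hsq : Real.sqrt (Q z) ^ 2 = Q z := Real.sq_sqrt hQz.le
    have hzR : z * R z = Real.sqrt (Q z)^2 - μ^2 := by
      rw [hsq, hQR z, hQ0]; ring
    rw [hfdef, hgdef]
    simp only []
    have hz0 : z ≠ 0 := hz.1.ne'
    field_simp
    nlinarith [hzR]
  -- G equality with integral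
  have hGeq : ∀ z, 0 < z → z ≤ z₀ → Real.log z + μ * TT Q zmax z
      = Real.log z₀ - ∫ t in z..z₀, g t := by
    intro z hz hzz
    have hK : ∀ u ∈ Set.Icc z z₀,
        HasDerivAt (fun w => (Real.log w + μ * TT Q zmax w) + ∫ t in w..z₀, g t) 0 u := by
      intro u hu
      have hu' : u ∈ Set.Ioo 0 zmax :=
        ⟨lt_of_lt_of_le hz hu.1, lt_of_le_of_lt hu.2 hz₀lt⟩
      have h1 := hGd u hu'
      rw [hGg u hu'] at h1
      have h2 : HasDerivAt (fun w => ∫ t in w..z₀, g t) (-(g u)) u :=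
        intervalIntegral.integral_hasDerivAt_left
          (hgi u z₀ ⟨(lt_of_lt_of_le hz hu.1).le, hu.2⟩ ⟨hz₀pos.le, le_rfl⟩)
          (hmeasg u hu') (hgc u hu'.1.le hu'.2)
      have hh := h1.add h2
      simp only [add_neg_cancel] at hh
      exact hh
    have hcon := const_of _ z z₀ hzz hK
    rw [hTz₀, intervalIntegral.integral_same] at hcon
    linarith [hcon]
  -- limit of the integral as z → 0+
  obtain ⟨C, hC⟩ : ∃ C, ∀ t ∈ Set.Icc 0 z₀, ‖g t‖ ≤ C :=
    isCompact_Icc.exists_bound_of_continuousOn hgco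
  have hJ0 : Tendsto (fun z => ∫ t in (0:ℝ)..z, g t)
      (nhdsWithin 0 (Set.Ioi 0)) (nhds 0) := by
    apply squeeze_zero_norm' (a := fun z => C * |z|)
    · filter_upwards [Ioo_mem_nhdsGT_of_mem (Set.left_mem_Ico.2 hz₀pos)] with z hz
      have : ∀ t ∈ Set.uIoc (0:ℝ) z, ‖g t‖ ≤ C := by
        intro t ht
        rw [Set.uIoc_of_le hz.1.le] at ht
        exact hC t ⟨ht.1.le, le_trans ht.2 hz.2.le⟩
      simpa using intervalIntegral.norm_integral_le_of_norm_le_const this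
    · have h2 : Continuous (fun z : ℝ => C * |z|) := continuous_const.mul continuous_abs
      have h3 := h2.tendsto 0
      simp only [abs_zero, mul_zero] at h3
      exact h3.mono_left nhdsWithin_le_nhds
  have hJten : Tendsto (fun z => ∫ t in z..z₀, g t) (nhdsWithin 0 (Set.Ioi 0))
      (nhds (∫ t in (0:ℝ)..z₀, g t)) := by
    have heq : ∀ z ∈ Set.Ioo (0:ℝ) z₀, (∫ t in z..z₀, g t)
        = (∫ t in (0:ℝ)..z₀, g t) - ∫ t in (0:ℝ)..z, g t := by
      intro z hz
      have h1 : IntervalIntegrable g volume 0 z :=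
        hgi 0 z ⟨le_rfl, hz₀pos.le⟩ ⟨hz.1.le, hz.2.le⟩
      have h2 : IntervalIntegrable g volume z z₀ :=
        hgi z z₀ ⟨hz.1.le, hz.2.le⟩ ⟨hz₀pos.le, le_rfl⟩
      have := intervalIntegral.integral_add_adjacent_intervals h1 h2
      linarith [this]
    have h3 : Tendsto (fun z => (∫ t in (0:ℝ)..z₀, g t) - ∫ t in (0:ℝ)..z, g t)
        (nhdsWithin 0 (Set.Ioi 0)) (nhds ((∫ t in (0:ℝ)..z₀, g t) - 0)) :=
      tendsto_const_nhds.sub hJ0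
    rw [sub_zero] at h3
    apply h3.congr'
    filter_upwards [Ioo_mem_nhdsGT_of_mem (Set.left_mem_Ico.2 hz₀pos)] with z hz
    exact (heq z hz).symm
  have hGlim : Tendsto (fun z => Real.log z + μ * TT Q zmax z)
      (nhdsWithin 0 (Set.Ioi 0)) (nhds (AA Q R zmax μ)) := by
    have h4 : Tendsto (fun z => Real.log z₀ - ∫ t in z..z₀, g t)
        (nhdsWithin 0 (Set.Ioi 0))
        (nhds (Real.log z₀ - ∫ t in (0:ℝ)..z₀, g t)) :=
      tendsto_const_nhds.sub hJten
    have hAA : AA Q R zmax μ = Real.log z₀ - ∫ t in (0:ℝ)..z₀, g t := by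
      rw [AA, ← hz₀def, hgdef]
    rw [← hAA] at h4
    apply h4.congr'
    filter_upwards [Ioo_mem_nhdsGT_of_mem (Set.left_mem_Ico.2 hz₀pos)] with z hz
    exact (hGeq z hz.1 hz.2.le).symm
  -- the atTop limit
  have hxT : Tendsto x atTop (nhdsWithin 0 (Set.Ioi 0)) :=
    tendsto_nhdsWithin_iff.mpr ⟨htop, Eventually.of_forall (fun τ => xpos τ)⟩
  have haT : Tendsto (fun τ => Real.log (x τ) + μ * τ) atTop
      (nhds (AA Q R zmax μ + μ * τ₁)) := by
    have hcomp : Tendsto (fun τ => Real.log (x τ) + μ * TT Q zmax (x τ)) atTop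
        (nhds (AA Q R zmax μ)) := hGlim.comp hxT
    have h5 := hcomp.add (tendsto_const_nhds (f := atTop) (x := μ * τ₁))
    apply h5.congr'
    filter_upwards [eventually_gt_atTop τ₀] with τ hτ
    rw [hTx τ hτ]; ring
  -- monotonicity of TT
  have hTmono : ∀ z w, z ∈ Set.Ioo 0 zmax → w ∈ Set.Ioo 0 zmax → z ≤ w →
      TT Q zmax w ≤ TT Q zmax z := by
    intro z w hz hw hzw
    have h1 : IntervalIntegrable f volume z w := hfi z w hz hw
    have h2 : IntervalIntegrable f volume w z₀ := hfi w z₀ hw hz₀mem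
    have hadd := intervalIntegral.integral_add_adjacent_intervals h1 h2
    have hnn : 0 ≤ ∫ t in z..w, f t := by
      apply intervalIntegral.integral_nonneg hzw
      intro u hu
      have hu1 : 0 < u := lt_of_lt_of_le hz.1 hu.1
      have hu2 : u < zmax := lt_of_le_of_lt hu.2 hw.2
      have hs : 0 < Real.sqrt (Q u) := Real.sqrt_pos.2 (hQpos u hu1.le hu2)
      rw [hfdef]
      positivity
    have e1 : TT Q zmax z = (∫ t in z..w, f t) + TT Q zmax w := by
      rw [TT, TT, ← hz₀def]
      linarith [hadd]
    linarith
  have hTlb : ∀ z ∈ Set.Ioo 0 zmax, τ₀ - τ₁ < TT Q zmax z := by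
    intro z hz
    obtain ⟨τ, hzx, hτ⟩ : ∃ τ, z < x τ ∧ τ₀ < τ := by
      have h1 : ∀ᶠ σ in nhds τ₀, z < x σ := hxτ₀.eventually_const_lt hz.2
      have h2 : ∀ᶠ σ in nhdsWithin τ₀ (Set.Ioi τ₀), z < x σ :=
        h1.filter_mono nhdsWithin_le_nhds
      exact (h2.and self_mem_nhdsWithin).exists
    have h2 := hTmono z (x τ) hz ⟨xpos τ, step1 τ hτ⟩ hzx.le
    rw [hTx τ hτ] at h2
    linarith
  have hΛ : Tendsto (TT Q zmax) (nhdsWithin zmax (Set.Iio zmax)) (nhds (τ₀ - τ₁)) := by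
    rw [tendsto_order]
    constructor
    · intro b hb
      filter_upwards [Ioo_mem_nhdsLT_of_mem (Set.mem_Ioc.2 ⟨hzmax, le_rfl⟩)] with z hz
      exact lt_trans hb (hTlb z hz)
    · intro b hb
      set τ₂ : ℝ := τ₀ + (b - (τ₀ - τ₁))/2 with hτ₂def
      have hτ₂ : τ₀ < τ₂ := by rw [hτ₂def]; linarith
      have hxm : x τ₂ ∈ Set.Ioo 0 zmax := ⟨xpos τ₂, step1 τ₂ hτ₂⟩
      have hmemz : Set.Ioo (x τ₂) zmax ∈ nhdsWithin zmax (Set.Iio zmax) :=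
        Ioo_mem_nhdsLT_of_mem (Set.mem_Ioc.2 ⟨hxm.2, le_rfl⟩)
      filter_upwards [hmemz] with z hz
      have hzm : z ∈ Set.Ioo 0 zmax := ⟨lt_trans hxm.1 hz.1, hz.2⟩
      have h6 := hTmono (x τ₂) z hxm hzm hz.1.le
      rw [hTx τ₂ hτ₂] at h6
      have : τ₂ - τ₁ < b := by rw [hτ₂def]; linarith
      linarith
  exact ⟨τ₁, hτ₁, haT, hΛ⟩

lemma posTraj (Q R : ℝ → ℝ) (hQ : Continuous Q) (hR : Continuous R)
    (hQR : ∀ z, Q z = Q 0 + z * R z)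
    (zmax μ : ℝ) (hzmax : 0 < zmax) (hμ : 0 < μ) (hQ0 : Q 0 = μ^2)
    (hQpos : ∀ z, 0 ≤ z → z < zmax → 0 < Q z)
    (x : ℝ → ℝ) (hx : ContDiff ℝ 1 x) (hmem : ∀ τ, x τ ∈ Set.Ioc 0 zmax)
    (hode : ∀ τ, (deriv x τ)^2 = (x τ)^2 * Q (x τ))
    (htop : Tendsto x atTop (nhds 0)) (hbot : Tendsto x atBot (nhds 0))
    (huniq : ∃! τ, deriv x τ = 0) :
    ∃ ap am Λ,
      Tendsto (fun τ => Real.log (x τ) + μ*τ) atTop (nhds ap) ∧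
      Tendsto (fun τ => Real.log (x τ) - μ*τ) atBot (nhds am) ∧
      ap + am = 2*(AA Q R zmax μ) - 2*μ*Λ ∧
      Tendsto (TT Q zmax) (nhdsWithin zmax (Set.Iio zmax)) (nhds Λ) := by
  classical
  obtain ⟨τ₀, hτ₀, huni⟩ := huniq
  have xpos : ∀ τ, 0 < x τ := fun τ => (hmem τ).1
  have xle : ∀ τ, x τ ≤ zmax := fun τ => (hmem τ).2
  have hxc : Continuous x := hx.continuous
  have hdc : Continuous (deriv x) := hx.continuous_deriv le_rfl
  -- global max
  obtain ⟨τs, hτs⟩ : ∃ τs, ∀ τ, x τ ≤ x τs := by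
    obtain ⟨N1, hN1⟩ := (htop.eventually_lt_const (xpos 0)).exists_forall_of_atTop
    obtain ⟨N2, hN2⟩ := (hbot.eventually_lt_const (xpos 0)).exists_forall_of_atBot
    have hcp : IsCompact (Set.Icc (min N2 0) (max N1 0)) := isCompact_Icc
    have h0mem : (0:ℝ) ∈ Set.Icc (min N2 0) (max N1 0) :=
      ⟨min_le_right _ _, le_max_right _ _⟩
    obtain ⟨τs, hτsmem, hτsmax⟩ := hcp.exists_isMaxOn ⟨0, h0mem⟩ hxc.continuousOn
    refine ⟨τs, fun τ => ?_⟩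
    rcases le_or_gt τ (max N1 0) with hc2 | hc2
    · rcases le_or_gt (min N2 0) τ with hc1 | hc1
      · exact hτsmax ⟨hc1, hc2⟩
      · have h1 : x τ < x 0 := hN2 τ (le_trans hc1.le (min_le_left _ _))
        exact le_trans h1.le (hτsmax h0mem)
    · have h1 : x τ < x 0 := hN1 τ (le_trans (le_max_left _ _) hc2.le)
      exact le_trans h1.le (hτsmax h0mem)
  have hlm : IsLocalMax x τs := Filter.Eventually.of_forall hτs
  have hτsz : deriv x τs = 0 := hlm.deriv_eq_zero
  have hτseq : τs = τ₀ := huni τs hτsz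
  have hxmax : ∀ τ, x τ ≤ x τ₀ := hτseq ▸ hτs
  -- x τ₀ = zmax
  have hx0 : x τ₀ = zmax := by
    by_contra hne
    have hlt : x τ₀ < zmax := lt_of_le_of_ne (xle τ₀) hne
    have hQp : 0 < Q (x τ₀) := hQpos _ (xpos τ₀).le hlt
    have h1 := hode τ₀
    rw [hτ₀] at h1
    nlinarith [mul_pos (pow_pos (xpos τ₀) 2) hQp]
  -- sign of deriv after τ₀
  have hneg : ∀ τ, τ₀ < τ → deriv x τ < 0 := by
    intro τ' hτ'
    rcases lt_trichotomy (deriv x τ') 0 with hd | hd | hd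
    · exact hd
    · exact absurd (huni τ' hd) (fun hc => absurd (hc ▸ hτ') (lt_irrefl _))
    · exfalso
      have hall : ∀ t, τ' ≤ t → 0 < deriv x t := by
        intro t ht
        rcases lt_trichotomy (deriv x t) 0 with h2 | h2 | h2
        · exfalso
          obtain ⟨c, hcmem, hc0⟩ :=
            intermediate_value_Icc' ht hdc.continuousOn ⟨h2.le, hd.le⟩
          have hcc : c = τ₀ := huni c hc0
          rw [hcc] at hcmem
          exact absurd (lt_of_lt_of_le hτ' hcmem.1) (lt_irrefl _)
        · exfalso
          have h3 : t = τ₀ := huni t h2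
          rw [h3] at ht
          exact absurd (lt_of_lt_of_le hτ' ht) (lt_irrefl _)
        · exact h2
      have hmono : StrictMonoOn x (Set.Ici τ') :=
        strictMonoOn_of_deriv_pos (convex_Ici τ') hxc.continuousOn
          (fun t ht => hall t (le_of_lt (by simpa [interior_Ici] using ht)))
      have hge : ∀ t, τ' + 1 ≤ t → x (τ'+1) ≤ x t := by
        intro t ht
        rcases eq_or_lt_of_le ht with h4 | h4
        · rw [← h4]
        · exact (hmono (by simp) (by simp only [Set.mem_Ici]; linarith) h4).le
      have h0 : x (τ'+1) ≤ 0 :=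
        ge_of_tendsto htop (eventually_atTop.2 ⟨τ'+1, hge⟩)
      exact absurd h0 (not_le.2 (xpos _))
  -- sign of deriv before τ₀
  have hpos : ∀ τ, τ < τ₀ → 0 < deriv x τ := by
    intro τ' hτ'
    rcases lt_trichotomy (deriv x τ') 0 with hd | hd | hd
    · exfalso
      have hall : ∀ t, t ≤ τ' → deriv x t < 0 := by
        intro t ht
        rcases lt_trichotomy (deriv x t) 0 with h2 | h2 | h2
        · exact h2
        · exfalso
          have h3 : t = τ₀ := huni t h2
          rw [h3] at ht
          exact absurd (lt_of_le_of_lt ht hτ') (lt_irrefl _)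
        · exfalso
          obtain ⟨c, hcmem, hc0⟩ :=
            intermediate_value_Icc' ht hdc.continuousOn ⟨hd.le, h2.le⟩
          have hcc : c = τ₀ := huni c hc0
          rw [hcc] at hcmem
          exact absurd (lt_of_le_of_lt hcmem.2 hτ') (lt_irrefl _)
      have hanti : StrictAntiOn x (Set.Iic τ') :=
        strictAntiOn_of_deriv_neg (convex_Iic τ') hxc.continuousOn
          (fun t ht => hall t (le_of_lt (by simpa [interior_Iic] using ht)))
      have hge : ∀ t, t ≤ τ' - 1 → x (τ'-1) ≤ x t := by
        intro t ht
        rcases eq_or_lt_of_le ht with h4 | h4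
        · rw [h4]
        · exact (hanti (by simp only [Set.mem_Iic]; linarith) (by simp only [Set.mem_Iic]; linarith) h4).le
      have h0 : x (τ'-1) ≤ 0 :=
        ge_of_tendsto hbot (eventually_atBot.2 ⟨τ'-1, hge⟩)
      exact absurd h0 (not_le.2 (xpos _))
    · exact absurd (huni τ' hd) (fun hc => absurd (hc ▸ hτ') (lt_irrefl _))
    · exact hd
  -- apply master to x
  obtain ⟨τ₁, hτ₁, haT, hΛ1⟩ :=
    master Q R hQ hR hQR zmax μ hzmax hμ hQ0 hQpos x hx hmem hode τ₀ hx0 hneg htop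
  -- apply master to the reflected trajectory
  set xr : ℝ → ℝ := fun τ => x (-τ) with hxrdef
  have hxr : ContDiff ℝ 1 xr := hx.comp contDiff_neg
  have hdxr : ∀ τ, deriv xr τ = -deriv x (-τ) := fun τ => deriv_comp_neg x τ
  have hmemr : ∀ τ, xr τ ∈ Set.Ioc 0 zmax := fun τ => hmem (-τ)
  have hoder : ∀ τ, (deriv xr τ)^2 = (xr τ)^2 * Q (xr τ) := by
    intro τ
    rw [hdxr τ]
    have h5 := hode (-τ)
    have h6 : (-deriv x (-τ))^2 = (deriv x (-τ))^2 := by ring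
    rw [h6]
    exact h5
  have hx0r : xr (-τ₀) = zmax := by
    show x (-(-τ₀)) = zmax
    rw [neg_neg]; exact hx0
  have hnegr : ∀ τ, -τ₀ < τ → deriv xr τ < 0 := by
    intro τ hτ
    rw [hdxr τ]
    have h7 := hpos (-τ) (by linarith)
    linarith
  have htopr : Tendsto xr atTop (nhds 0) := hbot.comp tendsto_neg_atTop_atBot
  obtain ⟨τ₂, hτ₂, hbT, hΛ2⟩ :=
    master Q R hQ hR hQR zmax μ hzmax hμ hQ0 hQpos xr hxr hmemr hoder (-τ₀) hx0r hnegr htopr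
  have hΛeq : τ₀ - τ₁ = -τ₀ - τ₂ := tendsto_nhds_unique hΛ1 hΛ2
  refine ⟨AA Q R zmax μ + μ*τ₁, AA Q R zmax μ + μ*τ₂, τ₀ - τ₁, haT, ?_, by linear_combination μ * hΛeq, hΛ1⟩
  have h8 := hbT.comp (tendsto_neg_atBot_atTop : Tendsto (fun τ : ℝ => -τ) atBot atTop)
  apply h8.congr
  intro τ
  show Real.log (x (-(-τ))) + μ * (-τ) = Real.log (x τ) - μ * τ
  rw [neg_neg]; ring

/-- Lemma 5.4.2: for every pseudotrajectory `(x(τ), y(τ))` of the separated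
Chaplygin–Sretensky equations on the critical level `k = 0`,
`λ² − 2 < 2h < 2`, the limits `φ₊ = lim_{τ→+∞} y/x` and `φ₋ = lim_{τ→−∞} y/x`
exist, are finite and nonzero, and their product `θ = φ₊·φ₋` is the same for
all pseudotrajectories. -/
theorem stmt14 (l h : ℝ) (h1 : l^2 - 2 < 2*h) (h2 : 2*h < 2) :
    let a : ℝ := Real.sqrt (2*(h + 1))
    let ζ₁ : ℝ := l - a
    let ζ₃ : ℝ := l + a
    let W : ℝ → ℝ := fun z =>
      -((z * (z - l)^2 - 2*(h + 1)*z) * (z * (z - l)^2 - 2*(h - 1)*z))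
    ∃ θ : ℝ, θ ≠ 0 ∧
      ∀ x y : ℝ → ℝ, ContDiff ℝ 1 x → ContDiff ℝ 1 y →
        (∀ τ : ℝ, x τ ∈ Set.Ioc 0 ζ₃) → (∀ τ : ℝ, y τ ∈ Set.Ico ζ₁ 0) →
        (∀ τ : ℝ, (deriv x τ)^2 = W (x τ)) → (∀ τ : ℝ, (deriv y τ)^2 = W (y τ)) →
        Tendsto x atTop (nhds 0) → Tendsto x atBot (nhds 0) →
        Tendsto y atTop (nhds 0) → Tendsto y atBot (nhds 0) →
        (∃! τ : ℝ, deriv x τ = 0) → (∃! τ : ℝ, deriv y τ = 0) →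
        ∃ φp φm : ℝ, φp ≠ 0 ∧ φm ≠ 0 ∧
          Tendsto (fun τ => y τ / x τ) atTop (nhds φp) ∧
          Tendsto (fun τ => y τ / x τ) atBot (nhds φm) ∧
          φp * φm = θ := by
  intro a ζ₁ ζ₃ W
  set Q : ℝ → ℝ := fun z => -(((z - l)^2 - 2*(h+1)) * ((z - l)^2 - 2*(h-1))) with hQdef
  set Rf : ℝ → ℝ := fun z => (z - 2*l) * (4*h - (z - l)^2 - l^2) with hRdef
  have hQ0pos : 0 < Q 0 := by
    have he : Q 0 = (2*(h+1) - l^2) * (l^2 - 2*(h-1)) := by simp only [hQdef]; ring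
    rw [he]
    apply mul_pos <;> nlinarith [sq_nonneg l]
  set μ : ℝ := Real.sqrt (Q 0) with hμdef
  have hμ : 0 < μ := Real.sqrt_pos.2 hQ0pos
  have hμ2 : Q 0 = μ^2 := (Real.sq_sqrt hQ0pos.le).symm
  have hh1 : 0 < 2*(h+1) := by nlinarith [sq_nonneg l]
  have ha2 : a^2 = 2*(h+1) := Real.sq_sqrt hh1.le
  have hapos : 0 < a := Real.sqrt_pos.2 hh1
  have hζ₃ : 0 < ζ₃ := by
    show 0 < l + a
    nlinarith [ha2, hapos, sq_nonneg (a + l)]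
  have hζ₁ : ζ₁ < 0 := by
    show l - a < 0
    nlinarith [ha2, hapos, sq_nonneg (a - l)]
  have hQpos : ∀ z, ζ₁ < z → z < ζ₃ → 0 < Q z := by
    intro z hz1 hz3
    have hz1' : -a < z - l := by
      have : l - a < z := hz1
      linarith
    have hz3' : z - l < a := by
      have : z < l + a := hz3
      linarith
    have e1 : (z - l)^2 < 2*(h+1) := by nlinarith [ha2]
    have e2 : 0 < (z - l)^2 - 2*(h-1) := by nlinarith [sq_nonneg (z - l)]
    have he : Q z = (2*(h+1) - (z-l)^2) * ((z-l)^2 - 2*(h-1)) := by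
      simp only [hQdef]; ring
    rw [he]
    exact mul_pos (by linarith) e2
  have hWQ : ∀ z, W z = z^2 * Q z := by
    intro z
    show -((z * (z - l)^2 - 2*(h + 1)*z) * (z * (z - l)^2 - 2*(h - 1)*z)) = z^2 * Q z
    simp only [hQdef]; ring
  have hQR : ∀ z, Q z = Q 0 + z * Rf z := by
    intro z; simp only [hQdef, hRdef]; ring
  have hQc : Continuous Q := by
    simp only [hQdef]; fun_prop
  have hRc : Continuous Rf := by
    simp only [hRdef]; fun_prop
  set Qn : ℝ → ℝ := fun z => Q (-z) with hQndef
  set Rn : ℝ → ℝ := fun z => -(Rf (-z)) with hRndef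
  have hQn0 : Qn 0 = Q 0 := by show Q (-0) = Q 0; rw [neg_zero]
  have hQnc : Continuous Qn := hQc.comp continuous_neg
  have hRnc : Continuous Rn := (hRc.comp continuous_neg).neg
  have hQnR : ∀ z, Qn z = Qn 0 + z * Rn z := by
    intro z
    show Q (-z) = Qn 0 + z * (-(Rf (-z)))
    rw [hQn0, hQR (-z)]; ring
  have hzmy : 0 < -ζ₁ := by linarith
  have hQnpos : ∀ z, 0 ≤ z → z < -ζ₁ → 0 < Qn z := by
    intro z h0 hz
    show 0 < Q (-z)
    exact hQpos (-z) (by linarith) (by linarith)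
  have hQpos' : ∀ z, 0 ≤ z → z < ζ₃ → 0 < Q z :=
    fun z h0 hz => hQpos z (lt_of_lt_of_le hζ₁ h0) hz
  have hQn0' : Qn 0 = μ^2 := by rw [hQn0]; exact hμ2
  refine ⟨Real.exp ((2*(AA Qn Rn (-ζ₁) μ) -
      2*μ*(limUnder (nhdsWithin (-ζ₁) (Set.Iio (-ζ₁))) (TT Qn (-ζ₁)))) -
      (2*(AA Q Rf ζ₃ μ) -
      2*μ*(limUnder (nhdsWithin ζ₃ (Set.Iio ζ₃)) (TT Q ζ₃)))),
    Real.exp_ne_zero _, ?_⟩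
  intro x y hx hy hmx hmy hox hoy hxT hxB hyT hyB hux huy
  have hox' : ∀ τ, (deriv x τ)^2 = (x τ)^2 * Q (x τ) := fun τ => by
    rw [hox τ, hWQ]
  obtain ⟨ap, am, Λx, hax, ham, hsx, hΛx⟩ :=
    posTraj Q Rf hQc hRc hQR ζ₃ μ hζ₃ hμ hμ2 hQpos' x hx hmx hox' hxT hxB hux
  -- the reflected y trajectory
  set ny : ℝ → ℝ := fun τ => -(y τ) with hnydef
  have hnyc : ContDiff ℝ 1 ny := hy.neg
  have hnypos : ∀ τ, 0 < ny τ := fun τ => neg_pos.2 (hmy τ).2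
  have hmny : ∀ τ, ny τ ∈ Set.Ioc 0 (-ζ₁) :=
    fun τ => ⟨hnypos τ, neg_le_neg (hmy τ).1⟩
  have hdny : ∀ τ, deriv ny τ = -(deriv y τ) := fun τ => deriv.neg
  have hony : ∀ τ, (deriv ny τ)^2 = (ny τ)^2 * Qn (ny τ) := by
    intro τ
    rw [hdny τ]
    have hq : Qn (ny τ) = Q (y τ) := by
      show Q (-(-(y τ))) = Q (y τ); rw [neg_neg]
    rw [hq]
    have h5 := hoy τ
    rw [hWQ (y τ)] at h5
    calc (-(deriv y τ))^2 = (deriv y τ)^2 := by ring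
    _ = (y τ)^2 * Q (y τ) := h5
    _ = (ny τ)^2 * Q (y τ) := by
        show _ = (-(y τ))^2 * _; ring
  have hnyT : Tendsto ny atTop (nhds 0) := by
    have := hyT.neg; simpa using this
  have hnyB : Tendsto ny atBot (nhds 0) := by
    have := hyB.neg; simpa using this
  have huny : ∃! τ, deriv ny τ = 0 := by
    obtain ⟨τu, hu1, hu2⟩ := huy
    refine ⟨τu, ?_, fun t ht => ?_⟩
    · show deriv ny τu = 0
      rw [hdny τu, hu1, neg_zero]
    · have ht' : deriv ny t = 0 := ht
      rw [hdny t, neg_eq_zero] at ht'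
      exact hu2 t ht'
  obtain ⟨bp, bm, Λy, hby, hbm, hsy, hΛy⟩ :=
    posTraj Qn Rn hQnc hRnc hQnR (-ζ₁) μ hzmy hμ hQn0' hQnpos ny hnyc hmny hony hnyT hnyB huny
  refine ⟨-Real.exp (bp - ap), -Real.exp (bm - am),
    neg_ne_zero.2 (Real.exp_ne_zero _), neg_ne_zero.2 (Real.exp_ne_zero _), ?_, ?_, ?_⟩
  · -- atTop
    have h9 : Tendsto (fun τ => (Real.log (ny τ) + μ*τ) - (Real.log (x τ) + μ*τ))
        atTop (nhds (bp - ap)) := hby.sub hax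
    have h10 := ((Real.continuous_exp.tendsto _).comp h9).neg
    apply h10.congr
    intro τ
    have hxp : 0 < x τ := (hmx τ).1
    show -Real.exp ((Real.log (ny τ) + μ*τ) - (Real.log (x τ) + μ*τ)) = y τ / x τ
    rw [show (Real.log (ny τ) + μ*τ) - (Real.log (x τ) + μ*τ)
        = Real.log (ny τ) - Real.log (x τ) from by ring,
      Real.exp_sub, Real.exp_log (hnypos τ), Real.exp_log hxp]
    show -(-(y τ) / x τ) = y τ / x τ
    rw [neg_div, neg_neg]
  · -- atBot
    have h9 : Tendsto (fun τ => (Real.log (ny τ) - μ*τ) - (Real.log (x τ) - μ*τ))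
        atBot (nhds (bm - am)) := hbm.sub ham
    have h10 := ((Real.continuous_exp.tendsto _).comp h9).neg
    apply h10.congr
    intro τ
    have hxp : 0 < x τ := (hmx τ).1
    show -Real.exp ((Real.log (ny τ) - μ*τ) - (Real.log (x τ) - μ*τ)) = y τ / x τ
    rw [show (Real.log (ny τ) - μ*τ) - (Real.log (x τ) - μ*τ)
        = Real.log (ny τ) - Real.log (x τ) from by ring,
      Real.exp_sub, Real.exp_log (hnypos τ), Real.exp_log hxp]
    show -(-(y τ) / x τ) = y τ / x τ
    rw [neg_div, neg_neg]
  · -- the product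
    rw [hΛx.limUnder_eq, hΛy.limUnder_eq]
    rw [neg_mul_neg, ← Real.exp_add]
    congr 1
    linarith [hsx, hsy]
end

section
/- For every real number a with 0 < a < 2, the inequality ∫_{−π/2}^{π/2} (4 − a²·cos²φ) / ( √(4 + a²·sin²φ) · ( 2 + √(4 + a²·sin²φ)·cos φ ) ) dφ < 2 holds. (At a = 0 the integral equals exactly 2.) -/
open Real Set intervalIntegral

lemma sqrt4 : Real.sqrt 4 = 2 := by
  rw [show (4:ℝ) = 2^2 by norm_num, Real.sqrt_sq (by norm_num : (0:ℝ) ≤ 2)]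

lemma contOn (a : ℝ) : ContinuousOn (fun φ : ℝ =>
    (4 - a^2 * Real.cos φ ^ 2) /
      (Real.sqrt (4 + a^2 * Real.sin φ ^ 2) *
        (2 + Real.sqrt (4 + a^2 * Real.sin φ ^ 2) * Real.cos φ)))
    (Icc (-(Real.pi/2)) (Real.pi/2)) := by
  have hs : ∀ φ : ℝ, (2:ℝ) ≤ Real.sqrt (4 + a^2 * Real.sin φ ^ 2) := by
    intro φ
    rw [← sqrt4]
    exact Real.sqrt_le_sqrt (le_add_of_nonneg_right (by positivity))
  apply ContinuousOn.div
  · fun_prop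
  · fun_prop
  · intro φ hφ
    have hc : 0 ≤ Real.cos φ := Real.cos_nonneg_of_mem_Icc (by simpa using hφ)
    have h1 := hs φ
    have h2 : (0:ℝ) < 2 + Real.sqrt (4 + a^2 * Real.sin φ ^ 2) * Real.cos φ := by positivity
    positivity

lemma int0 : (∫ φ in (-(Real.pi/2))..(Real.pi/2),
        (4 - (0:ℝ)^2 * Real.cos φ ^ 2) /
          (Real.sqrt (4 + (0:ℝ)^2 * Real.sin φ ^ 2) *
            (2 + Real.sqrt (4 + (0:ℝ)^2 * Real.sin φ ^ 2) * Real.cos φ))) = 2 := by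
  have hab : -(Real.pi/2) ≤ Real.pi/2 := by
    have := Real.pi_pos; linarith
  have key : (∫ φ in (-(Real.pi/2))..(Real.pi/2),
        (4 - (0:ℝ)^2 * Real.cos φ ^ 2) /
          (Real.sqrt (4 + (0:ℝ)^2 * Real.sin φ ^ 2) *
            (2 + Real.sqrt (4 + (0:ℝ)^2 * Real.sin φ ^ 2) * Real.cos φ)))
      = Real.tan (Real.pi/2/2) - Real.tan (-(Real.pi/2)/2) := by
    refine intervalIntegral.integral_eq_sub_of_hasDerivAt
      (f := fun φ => Real.tan (φ/2)) (fun φ hφ => ?_) ?_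
    · rw [uIcc_of_le hab] at hφ
      have hφ2 : φ/2 ∈ Ioo (-(Real.pi/2)) (Real.pi/2) := by
        constructor
        · have := hφ.1; have := Real.pi_pos; linarith
        · have := hφ.2; have := Real.pi_pos; linarith
      have hcpos := Real.cos_pos_of_mem_Ioo hφ2
      have hcos : Real.cos (φ/2) ≠ 0 := hcpos.ne'
      have h := (Real.hasDerivAt_tan hcos).comp φ ((hasDerivAt_id φ).div_const 2)
      convert h using 1
      · rfl
      · rfl
      have hcs : Real.cos (φ/2) ^ 2 = 1/2 + Real.cos φ / 2 := by
        rw [Real.cos_sq]; ring_nf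
      simp only [ne_eq, OfNat.ofNat_ne_zero, not_false_eq_true, zero_pow, zero_mul,
        sub_zero, add_zero, sqrt4]
      have hc2 : (0:ℝ) < 1 + Real.cos φ := by nlinarith [hcs, sq_nonneg (Real.cos (φ/2))]
      rw [hcs, div_mul_eq_mul_div, one_mul, div_eq_div_iff (by nlinarith : (0:ℝ) < 2*(2+2*Real.cos φ)).ne' (by linarith : (0:ℝ) < 1/2 + Real.cos φ/2).ne']
      ring
    · exact (contOn 0).intervalIntegrable_of_Icc hab
  rw [key]
  rw [show -(Real.pi/2)/2 = -(Real.pi/4) by ring, show Real.pi/2/2 = Real.pi/4 by ring,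
    Real.tan_neg, Real.tan_pi_div_four]
  norm_num

/-- The integral `Φ(a)` from Section 5.4 satisfies `Φ(a) < 2` for `0 < a < 2`,
while at `a = 0` it equals exactly `2`. -/
theorem stmt15 (a : ℝ) (ha : 0 < a) (ha2 : a < 2) :
    (∫ φ in (-(Real.pi/2))..(Real.pi/2),
        (4 - a^2 * Real.cos φ ^ 2) /
          (Real.sqrt (4 + a^2 * Real.sin φ ^ 2) *
            (2 + Real.sqrt (4 + a^2 * Real.sin φ ^ 2) * Real.cos φ))) < 2 ∧
    (∫ φ in (-(Real.pi/2))..(Real.pi/2),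
        (4 - (0:ℝ)^2 * Real.cos φ ^ 2) /
          (Real.sqrt (4 + (0:ℝ)^2 * Real.sin φ ^ 2) *
            (2 + Real.sqrt (4 + (0:ℝ)^2 * Real.sin φ ^ 2) * Real.cos φ))) = 2 := by
  refine ⟨?_, int0⟩
  have hab : -(Real.pi/2) < Real.pi/2 := by
    have := Real.pi_pos; linarith
  have key : ∀ φ ∈ Icc (-(Real.pi/2)) (Real.pi/2),
      (4 - a^2 * Real.cos φ ^ 2) /
          (Real.sqrt (4 + a^2 * Real.sin φ ^ 2) *
            (2 + Real.sqrt (4 + a^2 * Real.sin φ ^ 2) * Real.cos φ)) <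
      (4 - (0:ℝ)^2 * Real.cos φ ^ 2) /
          (Real.sqrt (4 + (0:ℝ)^2 * Real.sin φ ^ 2) *
            (2 + Real.sqrt (4 + (0:ℝ)^2 * Real.sin φ ^ 2) * Real.cos φ)) := by
    intro φ hφ
    have hc : 0 ≤ Real.cos φ := Real.cos_nonneg_of_mem_Icc (by simpa using hφ)
    set s := Real.sqrt (4 + a^2 * Real.sin φ ^ 2) with hsdef
    have hs2 : (2:ℝ) ≤ s := by
      rw [hsdef, ← sqrt4]
      exact Real.sqrt_le_sqrt (le_add_of_nonneg_right (by positivity))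
    have hssq : s^2 = 4 + a^2 * Real.sin φ ^ 2 := Real.sq_sqrt (by positivity)
    have hpyth : Real.sin φ ^ 2 = 1 - Real.cos φ ^ 2 := by
      nlinarith [Real.sin_sq_add_cos_sq φ]
    simp only [ne_eq, OfNat.ofNat_ne_zero, not_false_eq_true, zero_pow, zero_mul,
      sub_zero, add_zero, sqrt4]
    have hd1 : (0:ℝ) < s * (2 + s * Real.cos φ) := by
      have h2 : (0:ℝ) < 2 + s * Real.cos φ := by positivity
      positivity
    have hd2 : (0:ℝ) < 2 * (2 + 2 * Real.cos φ) := by positivity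
    rw [div_lt_div_iff₀ hd1 hd2]
    have hstrict : (4:ℝ) < 2*s + a^2 * Real.cos φ + a^2 * Real.cos φ ^ 2 := by
      rcases eq_or_lt_of_le hc with h0 | h0
      · have hsin : Real.sin φ ^ 2 = 1 := by rw [hpyth, ← h0]; ring
        have hss : s^2 = 4 + a^2 := by rw [hssq, hsin]; ring
        have h2s : 4 < 2*s := by nlinarith [hss, hs2]
        rw [← h0]; nlinarith [h2s]
      · have hp1 : 0 < a^2 * Real.cos φ := mul_pos (pow_pos ha 2) h0
        have hp2 : 0 ≤ a^2 * Real.cos φ ^ 2 := by positivity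
        linarith
    have hs2c : s^2 * Real.cos φ = (4 + a^2*(1 - Real.cos φ^2)) * Real.cos φ := by
      rw [hssq, hpyth]
    nlinarith [hstrict, hs2c]
  have h := intervalIntegral.integral_lt_integral_of_continuousOn_of_le_of_exists_lt hab
    (contOn a) (contOn 0)
    (fun x hx => (key x ⟨hx.1.le, hx.2⟩).le)
    ⟨0, ⟨by linarith, by linarith⟩, key 0 ⟨by linarith, by linarith⟩⟩
  rw [int0] at h
  exact h
end

section
/- Let (ω, ν) : ℝ → ℝ³ × ℝ³ be a differentiable solution of the Kovalevskaya system. Then each of the following functions of t is constant along the solution: H' = 2(ω₁² + ω₂²) + ω₃² − 2ν₁ (energy), G' = 2(ω₁ν₁ + ω₂ν₂) + ω₃ν₃ (area integral), Γ = ν₁² + ν₂² + ν₃² (geometric integral), and the Kovalevskaya integral K = (ω₁² − ω₂² + ν₁)² + (2ω₁ω₂ + ν₂)². -/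
lemma const_of_hasDerivAt_zero (f : ℝ → ℝ) (f' : ℝ → ℝ)
    (h : ∀ t, HasDerivAt f (f' t) t) (h0 : ∀ t, f' t = 0) :
    ∀ t s : ℝ, f t = f s := by
  have hd : ∀ t : ℝ, HasDerivAt f 0 t := fun t => h0 t ▸ h t
  intro t s
  exact is_const_of_deriv_eq_zero (f := f)
    (fun x => (hd x).differentiableAt) (fun x => (hd x).deriv) t s

/-- The energy, area integral, geometric integral and Kovalevskaya integral are
constant along any differentiable solution of the Kovalevskaya system. -/
theorem stmt16 (ω ν ω' ν' : ℝ → Fin 3 → ℝ)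
    (hω : ∀ t i, HasDerivAt (fun s => ω s i) (ω' t i) t)
    (hν : ∀ t i, HasDerivAt (fun s => ν s i) (ν' t i) t)
    (e1 : ∀ t, 2 * ω' t 0 = ω t 1 * ω t 2)
    (e2 : ∀ t, 2 * ω' t 1 = -(ω t 2 * ω t 0) - ν t 2)
    (e3 : ∀ t, ω' t 2 = ν t 1)
    (e4 : ∀ t, ν' t 0 = ω t 2 * ν t 1 - ω t 1 * ν t 2)
    (e5 : ∀ t, ν' t 1 = ω t 0 * ν t 2 - ω t 2 * ν t 0)
    (e6 : ∀ t, ν' t 2 = ω t 1 * ν t 0 - ω t 0 * ν t 1) :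
    (∀ t s : ℝ,
      2*(ω t 0 ^ 2 + ω t 1 ^ 2) + ω t 2 ^ 2 - 2 * ν t 0 =
        2*(ω s 0 ^ 2 + ω s 1 ^ 2) + ω s 2 ^ 2 - 2 * ν s 0) ∧
    (∀ t s : ℝ,
      2*(ω t 0 * ν t 0 + ω t 1 * ν t 1) + ω t 2 * ν t 2 =
        2*(ω s 0 * ν s 0 + ω s 1 * ν s 1) + ω s 2 * ν s 2) ∧
    (∀ t s : ℝ,
      ν t 0 ^ 2 + ν t 1 ^ 2 + ν t 2 ^ 2 = ν s 0 ^ 2 + ν s 1 ^ 2 + ν s 2 ^ 2) ∧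
    (∀ t s : ℝ,
      (ω t 0 ^ 2 - ω t 1 ^ 2 + ν t 0)^2 + (2 * ω t 0 * ω t 1 + ν t 1)^2 =
        (ω s 0 ^ 2 - ω s 1 ^ 2 + ν s 0)^2 + (2 * ω s 0 * ω s 1 + ν s 1)^2) := by
  refine ⟨?_, ?_, ?_, ?_⟩
  · apply const_of_hasDerivAt_zero _
      (fun t => 2*(2 * ω t 0 * ω' t 0 + 2 * ω t 1 * ω' t 1)
        + 2 * ω t 2 * ω' t 2 - 2 * ν' t 0)
    · intro t
      have h := ((((hω t 0).pow 2).add ((hω t 1).pow 2)).const_mul 2).add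
        ((hω t 2).pow 2) |>.sub ((hν t 0).const_mul 2)
      refine h.congr_deriv ?_
      push_cast; ring
    · intro t
      linear_combination (2 * ω t 0) * e1 t + (2 * ω t 1) * e2 t
        + (2 * ω t 2) * e3 t - 2 * e4 t
  · apply const_of_hasDerivAt_zero _
      (fun t => 2*(ω' t 0 * ν t 0 + ω t 0 * ν' t 0 + (ω' t 1 * ν t 1 + ω t 1 * ν' t 1))
        + (ω' t 2 * ν t 2 + ω t 2 * ν' t 2))
    · intro t
      have h := ((((hω t 0).mul (hν t 0)).add ((hω t 1).mul (hν t 1))).const_mul 2).add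
        ((hω t 2).mul (hν t 2))
      exact h
    · intro t
      linear_combination (ν t 0) * e1 t + (ν t 1) * e2 t + (ν t 2) * e3 t
        + (2 * ω t 0) * e4 t + (2 * ω t 1) * e5 t + (ω t 2) * e6 t
  · apply const_of_hasDerivAt_zero _
      (fun t => 2 * ν t 0 * ν' t 0 + 2 * ν t 1 * ν' t 1 + 2 * ν t 2 * ν' t 2)
    · intro t
      have h := (((hν t 0).pow 2).add ((hν t 1).pow 2)).add ((hν t 2).pow 2)
      refine h.congr_deriv ?_
      push_cast; ring
    · intro t
      linear_combination (2 * ν t 0) * e4 t + (2 * ν t 1) * e5 t + (2 * ν t 2) * e6 t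
  · apply const_of_hasDerivAt_zero _
      (fun t => 2 * (ω t 0 ^ 2 - ω t 1 ^ 2 + ν t 0)
          * (2 * ω t 0 * ω' t 0 - 2 * ω t 1 * ω' t 1 + ν' t 0)
        + 2 * (2 * ω t 0 * ω t 1 + ν t 1)
          * (2 * ω' t 0 * ω t 1 + 2 * ω t 0 * ω' t 1 + ν' t 1))
    · intro t
      have h := ((((hω t 0).pow 2).sub ((hω t 1).pow 2)).add (hν t 0)).pow 2 |>.add
        ((((((hω t 0).const_mul 2).mul (hω t 1))).add (hν t 1)).pow 2)
      refine h.congr_deriv ?_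
      simp only [Pi.add_apply, Pi.sub_apply, Pi.mul_apply, Pi.pow_apply]
      push_cast; ring
    · intro t
      linear_combination
        (2 * (ω t 0 ^ 2 - ω t 1 ^ 2 + ν t 0)) *
          ((ω t 0) * e1 t - (ω t 1) * e2 t + e4 t)
        + (2 * (2 * ω t 0 * ω t 1 + ν t 1)) *
          ((ω t 1) * e1 t + (ω t 0) * e2 t + e5 t)
end

section
/- Let ω, ν ∈ ℝ³ satisfy ν₁² + ν₂² + ν₃² = 1, and define h, g, k ∈ ℝ by 2h = 2(ω₁² + ω₂²) + ω₃² − 2ν₁, 2g = 2(ω₁ν₁ + ω₂ν₂) + ω₃ν₃, and k = (ω₁² − ω₂² + ν₁)² + (2ω₁ω₂ + ν₂)². Then the identity −(ω₁² + ω₂²)² + 2h(ω₁² + ω₂²) + 4gω₁ + 1 − k = (ω₁ω₃ + ν₃)² + ω₂²ω₃² holds. In particular, if ω₂ = 0 then the Kovalevskaya polynomial R(x) = −x⁴ + 2hx² + 4gx + 1 − k satisfies R(ω₁) = (ω₁ω₃ + ν₃)² and R'(ω₁) = 2ω₃(ω₁ω₃ + ν₃). -/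
/-- The key identity of Chapter 6:
`R(x₁,x₂) = (ω₁ω₃ + ν₃)² + ω₂²ω₃²` in the Kovalevskaya case, and its
consequence for `ω₂ = 0`: `R(ω₁) = (ω₁ω₃ + ν₃)²`, `R'(ω₁) = 2ω₃(ω₁ω₃ + ν₃)`. -/
theorem stmt17 (ω ν : Fin 3 → ℝ)
    (hunit : ν 0 ^ 2 + ν 1 ^ 2 + ν 2 ^ 2 = 1) (h g k : ℝ)
    (hh : 2*h = 2*(ω 0 ^ 2 + ω 1 ^ 2) + ω 2 ^ 2 - 2 * ν 0)
    (hg : 2*g = 2*(ω 0 * ν 0 + ω 1 * ν 1) + ω 2 * ν 2)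
    (hk : k = (ω 0 ^ 2 - ω 1 ^ 2 + ν 0)^2 + (2 * ω 0 * ω 1 + ν 1)^2) :
    (-(ω 0 ^ 2 + ω 1 ^ 2)^2 + 2*h*(ω 0 ^ 2 + ω 1 ^ 2) + 4*g*(ω 0) + 1 - k =
      (ω 0 * ω 2 + ν 2)^2 + ω 1 ^ 2 * ω 2 ^ 2) ∧
    (ω 1 = 0 →
      (-(ω 0)^4 + 2*h*(ω 0)^2 + 4*g*(ω 0) + 1 - k = (ω 0 * ω 2 + ν 2)^2 ∧
       deriv (fun x : ℝ => -x^4 + 2*h*x^2 + 4*g*x + 1 - k) (ω 0) =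
         2 * ω 2 * (ω 0 * ω 2 + ν 2))) := by
  have key : -(ω 0 ^ 2 + ω 1 ^ 2)^2 + 2*h*(ω 0 ^ 2 + ω 1 ^ 2) + 4*g*(ω 0) + 1 - k =
      (ω 0 * ω 2 + ν 2)^2 + ω 1 ^ 2 * ω 2 ^ 2 := by
    subst hk
    linear_combination (ω 0 ^ 2 + ω 1 ^ 2) * hh + 2 * (ω 0) * hg - hunit
  refine ⟨key, fun h1 => ?_⟩
  constructor
  · rw [h1] at key; linarith [key]
  · have hd : HasDerivAt (fun x : ℝ => -x^4 + 2*h*x^2 + 4*g*x + 1 - k)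
        (-(4*(ω 0)^3) + 2*h*(2*(ω 0)) + 4*g) (ω 0) := by
      have := (((((hasDerivAt_pow 4 (ω 0)).neg).add
        ((hasDerivAt_pow 2 (ω 0)).const_mul (2*h))).add
        ((hasDerivAt_id (ω 0)).const_mul (4*g))).add_const 1).sub_const k
      simp only [id] at this
      refine this.congr_deriv ?_
      norm_num
    rw [hd.deriv]
    rw [h1] at hh hg
    linear_combination 2*(ω 0) * hh + 2*hg
end

section
/- Let ω, ν ∈ ℝ³ satisfy ν₁² + ν₂² + ν₃² = 1, and suppose the gradients in ℝ⁶ at (ω, ν) of the four functions H' = 2(ω₁² + ω₂²) + ω₃² − 2ν₁, G' = 2(ω₁ν₁ + ω₂ν₂) + ω₃ν₃, Γ = ν₁² + ν₂² + ν₃², and K = (ω₁² − ω₂² + ν₁)² + (2ω₁ω₂ + ν₂)² are linearly dependent. Define h, g, k by H' = 2h, G' = 2g, K = k (note k ≥ 0 automatically). If g ≠ 0 and h = 2g² + √k, then 16·g⁴·k ≤ 1 (equivalently, √k ≤ 1/(4g²)). -/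
noncomputable abbrev pom (i : Fin 3) : ((Fin 3 → ℝ) × (Fin 3 → ℝ)) →L[ℝ] ℝ :=
  (ContinuousLinearMap.proj i).comp (ContinuousLinearMap.fst ℝ (Fin 3 → ℝ) (Fin 3 → ℝ))
noncomputable abbrev pnu (i : Fin 3) : ((Fin 3 → ℝ) × (Fin 3 → ℝ)) →L[ℝ] ℝ :=
  (ContinuousLinearMap.proj i).comp (ContinuousLinearMap.snd ℝ (Fin 3 → ℝ) (Fin 3 → ℝ))

private lemma lefrac (s n D : ℝ) (h1 : (1-s)*n = D) (h2 : 0 ≤ D) (h3 : 0 < n) :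
    s ≤ 1 := by nlinarith

private lemma sqle (g t k : ℝ) (ht0 : 0 ≤ t) (ht2 : t^2 = k) (h1 : 4*g^2*t ≤ 1) :
    16*g^4*k ≤ 1 := by
  have h0 : 0 ≤ 4*g^2*t := by positivity
  have h3 : 16*g^4*k = (4*g^2*t)^2 := by rw [← ht2]; ring
  nlinarith [h0, h1]

private lemma leafY0 (x u v g t k : ℝ) (hunit : u^2+v^2 = 1) (hgxu : g = x*u)
    (htp : t = x^2 - u - 2*x^2*u^2) (ht0 : 0 ≤ t) (ht2 : t^2 = k)
    (hkk : k = (x^2+u)^2+v^2) : 16*g^4*k ≤ 1 := by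
  have hfac : (1-u^2)*(2*x^2*u+1)^2 = 0 := by
    linear_combination (t + (x^2-u-2*x^2*u^2))*htp - ht2 - hkk - hunit
  rcases mul_eq_zero.mp hfac with h1 | h2
  · have hu : (u-1)*(u+1) = 0 := by linear_combination -h1
    rcases mul_eq_zero.mp hu with hu1 | hu2
    · have htneg : t = -1-x^2 := by
        linear_combination htp + (-2*x^2*u-2*x^2-1)*hu1
      nlinarith [sq_nonneg x]
    · have htv : t = 1-x^2 := by
        linear_combination htp + (-2*x^2*u+2*x^2-1)*hu2
      have hg2 : g^2 = x^2 := by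
        linear_combination (g+x*u)*hgxu + x^2*(u-1)*hu2
      refine sqle g t k ht0 ht2 ?_
      have h4 : 4*g^2*t = 4*x^2*(1-x^2) := by rw [hg2, htv]
      rw [h4]; nlinarith [sq_nonneg (1-2*x^2)]
  · have h2' : 2*x^2*u+1 = 0 := pow_eq_zero_iff (two_ne_zero) |>.mp h2
    have htx : t = x^2 := by linear_combination htp - u*h2'
    have h4 : 4*g^2*t = 1 := by
      linear_combination 4*t*(g+x*u)*hgxu + 4*x^2*u^2*htx + (2*x^2*u-1)*h2'
    exact sqle g t k ht0 ht2 (le_of_eq h4)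

private lemma leafM (x M g t k : ℝ) (hgM : g = -x*M)
    (htp : t = x^2 + M - 2*x^2*M^2) (hkM : k = x^4+1-2*x^2*M)
    (ht0 : 0 ≤ t) (ht2 : t^2 = k) : 16*g^4*k ≤ 1 := by
  have hfacM : (M^2-1)*(1-2*x^2*M)^2 = 0 := by
    linear_combination ht2 - (t + (x^2+M-2*x^2*M^2))*htp + hkM
  rcases mul_eq_zero.mp hfacM with h1 | h2
  · have hM : (M-1)*(M+1) = 0 := by linear_combination h1
    rcases mul_eq_zero.mp hM with hM1 | hM2
    · have htv : t = 1-x^2 := by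
        linear_combination htp + (-2*x^2*M+1-2*x^2)*hM1
      have hg2 : g^2 = x^2 := by
        linear_combination (g-x*M)*hgM + x^2*(M+1)*hM1
      refine sqle g t k ht0 ht2 ?_
      have h4 : 4*g^2*t = 4*x^2*(1-x^2) := by rw [hg2, htv]
      rw [h4]; nlinarith [sq_nonneg (1-2*x^2)]
    · have htneg : t = -1-x^2 := by
        linear_combination htp + (-2*x^2*M+2*x^2+1)*hM2
      nlinarith [sq_nonneg x]
  · have h2' : 1-2*x^2*M = 0 := pow_eq_zero_iff (two_ne_zero) |>.mp h2
    have htx : t = x^2 := by linear_combination htp + M*h2'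
    have h4 : 4*g^2*t = 1 := by
      linear_combination 4*t*(g-x*M)*hgM + 4*x^2*M^2*htx - (2*x^2*M+1)*h2'
    exact sqle g t k ht0 ht2 (le_of_eq h4)

set_option maxHeartbeats 1000000 in
private lemma algebra_main (x y o3 u v n3 A B C Dd g t k : ℝ)
    (hunit : u^2 + v^2 + n3^2 = 1)
    (hg2 : 2*g = 2*(x*u + y*v) + o3*n3)
    (hh2 : 2*(2*g^2 + t) = 2*(x^2 + y^2) + o3^2 - 2*u)
    (hkk : k = (x^2 - y^2 + u)^2 + (2*x*y + v)^2)
    (ht0 : 0 ≤ t) (ht2 : t^2 = k) (hg0 : g ≠ 0)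
    (hex : ¬(A = 0 ∧ B = 0 ∧ C = 0 ∧ Dd = 0))
    (e1 : 4*A*x + 2*B*u + 4*Dd*((x^2 - y^2 + u)*x + (2*x*y + v)*y) = 0)
    (e2 : 4*A*y + 2*B*v + 4*Dd*((2*x*y + v)*x - (x^2 - y^2 + u)*y) = 0)
    (e3 : 2*A*o3 + B*n3 = 0)
    (e4 : -(2*A) + 2*B*x + 2*C*u + 2*Dd*(x^2 - y^2 + u) = 0)
    (e5 : 2*B*y + 2*C*v + 2*Dd*(2*x*y + v) = 0)
    (e6 : B*o3 + 2*C*n3 = 0) :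
    16*g^4*k ≤ 1 := by
  by_cases hDd : Dd = 0
  · -- case d = 0
    subst hDd
    by_cases hB : B = 0
    · subst hB
      by_cases hA : A = 0
      · subst hA
        have hC : C ≠ 0 := by
          rintro rfl; exact hex ⟨rfl, rfl, rfl, rfl⟩
        have hu0 : u = 0 := by
          have h : C*u = 0 := by linear_combination e4/2
          exact (mul_eq_zero.mp h).resolve_left hC
        have hv0 : v = 0 := by
          have h : C*v = 0 := by linear_combination e5/2
          exact (mul_eq_zero.mp h).resolve_left hC
        have hn0 : n3 = 0 := by
          have h : C*n3 = 0 := by linear_combination e6/2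
          exact (mul_eq_zero.mp h).resolve_left hC
        rw [hu0, hv0, hn0] at hunit; norm_num at hunit
      · have hx0 : x = 0 := by
          have h : A*x = 0 := by linear_combination e1/4
          exact (mul_eq_zero.mp h).resolve_left hA
        have hy0 : y = 0 := by
          have h : A*y = 0 := by linear_combination e2/4
          exact (mul_eq_zero.mp h).resolve_left hA
        have ho0 : o3 = 0 := by
          have h : A*o3 = 0 := by linear_combination e3/2
          exact (mul_eq_zero.mp h).resolve_left hA
        exact absurd (by linear_combination hg2/2 + u*hx0 + v*hy0 + (n3/2)*ho0) hg0
    · have hbu : B*u = -(2*A*x) := by linear_combination e1/2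
      have hbv : B*v = -(2*A*y) := by linear_combination e2/2
      have hbn : B*n3 = -(2*A*o3) := by linear_combination e3
      have h5 : y*(B^2 - 2*A*C) = 0 := by linear_combination (B/2)*e5 - C*hbv
      have h6 : o3*(B^2 - 4*A*C) = 0 := by linear_combination B*e6 - 2*C*hbn
      have h4 : x*(B^2 - 2*A*C) = A*B := by linear_combination (B/2)*e4 - C*hbu
      by_cases h2AC : B^2 - 2*A*C = 0
      · exfalso
        have hA0 : A = 0 := by
          have h : A*B = 0 := by linear_combination -h4 + x*h2AC
          exact (mul_eq_zero.mp h).resolve_right hB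
        exact hB (pow_eq_zero_iff (two_ne_zero) |>.mp
          (by linear_combination h2AC + 2*C*hA0))
      · have hy0 : y = 0 := (mul_eq_zero.mp h5).resolve_right h2AC
        have hv0 : v = 0 := by
          have h : B*v = 0 := by linear_combination hbv - 2*A*hy0
          exact (mul_eq_zero.mp h).resolve_left hB
        by_cases h4AC : B^2 - 4*A*C = 0
        · have hC : C ≠ 0 := by
            rintro rfl
            exact hB (pow_eq_zero_iff (two_ne_zero) |>.mp (by linear_combination h4AC))
          have hA : A ≠ 0 := by
            rintro rfl
            exact hB (pow_eq_zero_iff (two_ne_zero) |>.mp (by linear_combination h4AC))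
          have hcx : 2*C*x = B := by
            have h : A*(2*C*x - B) = 0 := by linear_combination h4 - x*h4AC
            have h' := (mul_eq_zero.mp h).resolve_left hA
            linarith
          have hbx : B*x = 2*A := by
            have h : C*(B*x - 2*A) = 0 := by
              linear_combination (B/2)*hcx + (1/2)*h4AC
            have h' := (mul_eq_zero.mp h).resolve_left hC
            linarith
          have hz1 : x^2 - y^2 + u = 0 := by
            have h : B^2*(x^2 - y^2 + u) = 0 := by
              linear_combination B*x*hbx + B*hbu - B^2*y*hy0
            exact (mul_eq_zero.mp h).resolve_left (pow_ne_zero 2 hB)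
          have hk0 : k = 0 := by
            linear_combination hkk + (x^2 - y^2 + u)*hz1 +
              (2*x*y + v)*(2*x*hy0 + hv0)
          rw [hk0]; norm_num
        · have ho0 : o3 = 0 := (mul_eq_zero.mp h6).resolve_right h4AC
          have hn0 : n3 = 0 := by
            have h : B*n3 = 0 := by linear_combination hbn - 2*A*ho0
            exact (mul_eq_zero.mp h).resolve_left hB
          subst hy0; subst ho0; subst hn0; subst hv0
          have hgxu : g = x*u := by linear_combination hg2/2
          refine leafY0 x u 0 g t k (by linear_combination hunit) hgxu ?_ ht0 ht2
            (by linear_combination hkk)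
          linear_combination hh2/2 - 2*(g + x*u)*hgxu
  · -- case d ≠ 0
    by_cases ho3 : o3 = 0
    · subst ho3
      by_cases hn3 : n3 = 0
      · -- pendulum family
        subst hn3
        have hdet : Dd * (y*((u^2 - v^2)*(2*x*y + v) - 2*u*v*(x^2 - y^2 + u))) = 0 := by
          linear_combination ((-v^2 + 2*y^2*u - 2*x*y*v)/4)*e1 +
            ((u*v - 2*x*y*u + 2*x^2*v)/4)*e2 + ((y*u*v - x*v^2)/2)*e4 +
            ((-(y*u^2) + x*u*v)/2)*e5
        have ylm := (mul_eq_zero.mp hdet).resolve_left hDd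
        rcases mul_eq_zero.mp ylm with hy0 | hIm
        · subst hy0
          have hgxu : g = x*u := by linear_combination hg2/2
          refine leafY0 x u v g t k (by linear_combination hunit) hgxu ?_ ht0 ht2
            (by linear_combination hkk)
          linear_combination hh2/2 - 2*(g + x*u)*hgxu
        · have hgv : g = x*u + y*v := by linear_combination hg2/2
          have hF2 : 2*g*(y*u - x*v) = v := by
            linear_combination 2*(y*u - x*v)*hgv + hIm + v*hunit
          have hF3 : g^2 + (y*u - x*v)^2 = x^2 + y^2 := by
            linear_combination (g + (x*u + y*v))*hgv + (x^2 + y^2)*hunit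
          have hurel : u = (y*u - x*v)^2 - g^2 - t := by
            linear_combination hh2/2 - hF3
          have hcirc : ((y*u - x*v)^2 - g^2 - t)^2 + 4*g^2*(y*u - x*v)^2 = 1 := by
            linear_combination hunit - (u + ((y*u - x*v)^2 - g^2 - t))*hurel +
              (2*g*(y*u - x*v) + v)*hF2
          have hfin1 : 1 - 4*g^2*t = (t - g^2 - (y*u - x*v)^2)^2 := by
            linear_combination -hcirc
          refine sqle g t k ht0 ht2 ?_
          nlinarith [hfin1, sq_nonneg (t - g^2 - (y*u - x*v)^2)]
      · -- o3 = 0, n3 ≠ 0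
        have hB0 : B = 0 := by
          have h : B*n3 = 0 := by linear_combination e3
          exact (mul_eq_zero.mp h).resolve_right hn3
        have hC0 : C = 0 := by
          have h : C*n3 = 0 := by linear_combination e6/2
          exact (mul_eq_zero.mp h).resolve_right hn3
        subst hB0; subst hC0
        have hz2 : 2*x*y + v = 0 := by
          have h : Dd*(2*x*y + v) = 0 := by linear_combination e5/2
          exact (mul_eq_zero.mp h).resolve_left hDd
        have h8 : (x^2 - y^2 + u)*x = 0 := by
          have h : Dd*((x^2 - y^2 + u)*x) = 0 := by
            linear_combination (1/8)*e1 + (x/4)*e4 - (Dd*y/2)*hz2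
          exact (mul_eq_zero.mp h).resolve_left hDd
        rcases mul_eq_zero.mp h8 with hz1 | hx0
        · have hk0 : k = 0 := by
            linear_combination hkk + (x^2 - y^2 + u)*hz1 + (2*x*y + v)*hz2
          rw [hk0]; norm_num
        · have hv0 : v = 0 := by linear_combination hz2 - 2*y*hx0
          exact absurd (by linear_combination hg2/2 + u*hx0 + y*hv0 : g = 0) hg0
    · by_cases hn3 : n3 = 0
      · -- o3 ≠ 0, n3 = 0
        subst hn3
        have hA0 : A = 0 := by
          have h : A*o3 = 0 := by linear_combination e3/2
          exact (mul_eq_zero.mp h).resolve_right ho3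
        have hB0 : B = 0 := by
          have h : B*o3 = 0 := by linear_combination e6
          exact (mul_eq_zero.mp h).resolve_right ho3
        subst hA0; subst hB0
        have hP1 : (x^2 - y^2 + u)*x + (2*x*y + v)*y = 0 := by
          have h : Dd*((x^2 - y^2 + u)*x + (2*x*y + v)*y) = 0 := by
            linear_combination e1/4
          exact (mul_eq_zero.mp h).resolve_left hDd
        have hP2 : (2*x*y + v)*x - (x^2 - y^2 + u)*y = 0 := by
          have h : Dd*((2*x*y + v)*x - (x^2 - y^2 + u)*y) = 0 := by
            linear_combination e2/4
          exact (mul_eq_zero.mp h).resolve_left hDd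
        by_cases hxy : x^2 + y^2 = 0
        · have hx0 : x = 0 := by nlinarith [sq_nonneg x, sq_nonneg y]
          have hy0 : y = 0 := by nlinarith [sq_nonneg x, sq_nonneg y]
          exact absurd (by linear_combination hg2/2 + u*hx0 + v*hy0 : g = 0) hg0
        · have hz1 : x^2 - y^2 + u = 0 := by
            have h : (x^2 + y^2)*(x^2 - y^2 + u) = 0 := by
              linear_combination x*hP1 - y*hP2
            exact (mul_eq_zero.mp h).resolve_left hxy
          have hz2 : 2*x*y + v = 0 := by
            have h : (x^2 + y^2)*(2*x*y + v) = 0 := by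
              linear_combination y*hP1 + x*hP2
            exact (mul_eq_zero.mp h).resolve_left hxy
          have hk0 : k = 0 := by
            linear_combination hkk + (x^2 - y^2 + u)*hz1 + (2*x*y + v)*hz2
          rw [hk0]; norm_num
      · -- o3 ≠ 0, n3 ≠ 0
        by_cases hBz : B = 0
        · subst hBz
          have hA0 : A = 0 := by
            have h : A*o3 = 0 := by linear_combination e3/2
            exact (mul_eq_zero.mp h).resolve_right ho3
          have hC0 : C = 0 := by
            have h : C*n3 = 0 := by linear_combination e6/2
            exact (mul_eq_zero.mp h).resolve_right hn3
          subst hA0; subst hC0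
          have hz1 : x^2 - y^2 + u = 0 := by
            have h : Dd*(x^2 - y^2 + u) = 0 := by linear_combination e4/2
            exact (mul_eq_zero.mp h).resolve_left hDd
          have hz2 : 2*x*y + v = 0 := by
            have h : Dd*(2*x*y + v) = 0 := by linear_combination e5/2
            exact (mul_eq_zero.mp h).resolve_left hDd
          have hk0 : k = 0 := by
            linear_combination hkk + (x^2 - y^2 + u)*hz1 + (2*x*y + v)*hz2
          rw [hk0]; norm_num
        · -- class IV family
          have hI1' : u*o3*n3 + o3^2*(u*x + v*y) - 2*x*n3^2 - 2*(x^2 + y^2)*n3*o3 = 0 := by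
            have h : B*(u*o3*n3 + o3^2*(u*x + v*y) - 2*x*n3^2 - 2*(x^2 + y^2)*n3*o3) = 0 := by
              linear_combination (n3*o3/2)*e1 - 2*x*n3*e3 - x*n3*o3*e4 - y*n3*o3*e5 +
                o3*(x*u + y*v)*e6
            exact (mul_eq_zero.mp h).resolve_left hBz
          have hI2' : v*o3*n3 + o3^2*(v*x - u*y) = 0 := by
            have h : B*(v*o3*n3 + o3^2*(v*x - u*y)) = 0 := by
              linear_combination (n3*o3/2)*e2 + y*n3*o3*e4 - x*n3*o3*e5 +
                o3*(x*v - y*u)*e6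
            exact (mul_eq_zero.mp h).resolve_left hBz
          have hI2n : v*(n3 + o3*x) - u*(o3*y) = 0 := by
            have h : o3*(v*(n3 + o3*x) - u*(o3*y)) = 0 := by linear_combination hI2'
            exact (mul_eq_zero.mp h).resolve_left ho3
          have hI1n : o3*(u*(n3 + o3*x) + v*(o3*y)) =
              2*n3*(x*n3 + (x^2 + y^2)*o3) := by
            linear_combination hI1'
          by_cases hD2 : (n3 + o3*x)^2 + (o3*y)^2 = 0
          · have hS1z : n3 + o3*x = 0 := by
              nlinarith [sq_nonneg (n3 + o3*x), sq_nonneg (o3*y)]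
            have hS2z : o3*y = 0 := by
              nlinarith [sq_nonneg (n3 + o3*x), sq_nonneg (o3*y)]
            have hy0 : y = 0 := (mul_eq_zero.mp hS2z).resolve_left ho3
            subst hy0
            have hgM : g = -x*(o3^2/2 - u) := by
              linear_combination hg2/2 + (o3/2)*hS1z
            have htp : t = x^2 + (o3^2/2 - u) - 2*x^2*(o3^2/2 - u)^2 := by
              linear_combination hh2/2 - 2*(g - x*(o3^2/2 - u))*hgM
            have hkM : k = x^4 + 1 - 2*x^2*(o3^2/2 - u) := by
              linear_combination hkk + hunit - (n3 - o3*x)*hS1z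
            exact leafM x (o3^2/2 - u) g t k hgM htp hkM ht0 ht2
          · have huD : u*((n3 + o3*x)^2 + (o3*y)^2) =
                (u*(n3 + o3*x) + v*(o3*y))*(n3 + o3*x) := by
              linear_combination (-(o3*y))*hI2n
            have hvD : v*((n3 + o3*x)^2 + (o3*y)^2) =
                (u*(n3 + o3*x) + v*(o3*y))*(o3*y) := by
              linear_combination (n3 + o3*x)*hI2n
            have hkey1 : 2*g*o3*((n3 + o3*x)^2 + (o3*y)^2) =
                n3*(4*(x*n3 + (x^2 + y^2)*o3)^2 + o3^2*((n3 + o3*x)^2 + (o3*y)^2)) := by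
              linear_combination o3*((n3 + o3*x)^2 + (o3*y)^2)*hg2 + 2*o3*x*huD +
                2*o3*y*hvD + 2*(x*n3 + (x^2 + y^2)*o3)*hI1n
            have hP2l : (1 - n3^2)*((n3 + o3*x)^2 + (o3*y)^2) =
                (u*(n3 + o3*x) + v*(o3*y))^2 := by
              linear_combination (-((n3 + o3*x)^2 + (o3*y)^2))*hunit +
                (v*(n3 + o3*x) - u*(o3*y))*hI2n
            have hkey2 : o3^2*(1 - n3^2)*((n3 + o3*x)^2 + (o3*y)^2) =
                4*n3^2*(x*n3 + (x^2 + y^2)*o3)^2 := by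
              linear_combination o3^2*hP2l + (o3*(u*(n3 + o3*x) + v*(o3*y)) +
                2*n3*(x*n3 + (x^2 + y^2)*o3))*hI1n
            have hgn0 : o3*((n3 + o3*x)^2 + (o3*y)^2)*n3*(2*g*n3 - o3) = 0 := by
              linear_combination n3^2*hkey1 - n3*hkey2
            have hgn : 2*g*n3 = o3 := by
              have h' := (mul_eq_zero.mp hgn0).resolve_left
                (mul_ne_zero (mul_ne_zero ho3 hD2) hn3)
              linarith
            have hg4 : 4*g^2*n3^2 = o3^2 := by
              linear_combination (2*g*n3 + o3)*hgn
            have hu_val : u*o3*((n3 + o3*x)^2 + (o3*y)^2) =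
                2*n3*(x*n3 + (x^2 + y^2)*o3)*(n3 + o3*x) := by
              linear_combination (n3 + o3*x)*hI1n + o3*huD
            have hTd : n3^2*((n3 + o3*x)^2 + (o3*y)^2)*
                (o3^2*t - (n3^2 - ((n3 + o3*x)^2 + (o3*y)^2))) = 0 := by
              linear_combination (n3^2*((n3 + o3*x)^2 + (o3*y)^2)*o3^2/2)*hh2 -
                (n3^2*o3)*hu_val - (((n3 + o3*x)^2 + (o3*y)^2)*o3^2/2)*hg4 -
                (o3^2/2)*hkey2
            have hT : o3^2*t = n3^2 - ((n3 + o3*x)^2 + (o3*y)^2) := by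
              have h' := (mul_eq_zero.mp hTd).resolve_left
                (mul_ne_zero (pow_ne_zero 2 hn3) hD2)
              linarith
            have he : 4*g^2*t*n3^2 = n3^2 - ((n3 + o3*x)^2 + (o3*y)^2) := by
              linear_combination t*hg4 + hT
            have hn3sq : 0 < n3^2 := by positivity
            have hD2nn : (0:ℝ) ≤ (n3 + o3*x)^2 + (o3*y)^2 := by positivity
            have h1 : (1 - 4*g^2*t)*n3^2 = (n3 + o3*x)^2 + (o3*y)^2 := by
              linear_combination -he
            exact sqle g t k ht0 ht2 (lefrac _ _ _ h1 hD2nn hn3sq)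

set_option maxHeartbeats 2000000 in
/-- On the upper branch `h = 2g² + √k` of the parabola `k = (h − 2g²)²` (the
3rd Appelrot class) with `g ≠ 0`, real critical points of the Kovalevskaya
integral map exist only for `16g⁴k ≤ 1`. -/
theorem stmt19 (ω ν : Fin 3 → ℝ)
    (hunit : ν 0 ^ 2 + ν 1 ^ 2 + ν 2 ^ 2 = 1)
    (hdep : ¬ LinearIndependent ℝ
      ![fderiv ℝ (fun p : (Fin 3 → ℝ) × (Fin 3 → ℝ) =>
          2*(p.1 0 ^ 2 + p.1 1 ^ 2) + p.1 2 ^ 2 - 2 * p.2 0) (ω, ν),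
        fderiv ℝ (fun p : (Fin 3 → ℝ) × (Fin 3 → ℝ) =>
          2*(p.1 0 * p.2 0 + p.1 1 * p.2 1) + p.1 2 * p.2 2) (ω, ν),
        fderiv ℝ (fun p : (Fin 3 → ℝ) × (Fin 3 → ℝ) =>
          p.2 0 ^ 2 + p.2 1 ^ 2 + p.2 2 ^ 2) (ω, ν),
        fderiv ℝ (fun p : (Fin 3 → ℝ) × (Fin 3 → ℝ) =>
          (p.1 0 ^ 2 - p.1 1 ^ 2 + p.2 0)^2 + (2 * p.1 0 * p.1 1 + p.2 1)^2) (ω, ν)])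
    (h g k : ℝ)
    (hh : 2*h = 2*(ω 0 ^ 2 + ω 1 ^ 2) + ω 2 ^ 2 - 2 * ν 0)
    (hg : 2*g = 2*(ω 0 * ν 0 + ω 1 * ν 1) + ω 2 * ν 2)
    (hk : k = (ω 0 ^ 2 - ω 1 ^ 2 + ν 0)^2 + (2 * ω 0 * ω 1 + ν 1)^2)
    (hg0 : g ≠ 0) (hbranch : h = 2*g^2 + Real.sqrt k) :
    16 * g^4 * k ≤ 1 := by
  have hom : ∀ i, HasFDerivAt (fun p : (Fin 3 → ℝ) × (Fin 3 → ℝ) => p.1 i) (pom i) (ω, ν) :=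
    fun i => (pom i).hasFDerivAt
  have hnu : ∀ i, HasFDerivAt (fun p : (Fin 3 → ℝ) × (Fin 3 → ℝ) => p.2 i) (pnu i) (ω, ν) :=
    fun i => (pnu i).hasFDerivAt
  -- derivative of H'
  have d0 : HasFDerivAt (fun p : (Fin 3 → ℝ) × (Fin 3 → ℝ) =>
      2*(p.1 0 ^ 2 + p.1 1 ^ 2) + p.1 2 ^ 2 - 2 * p.2 0)
      ((4*ω 0) • pom 0 + (4*ω 1) • pom 1 + (2*ω 2) • pom 2 - (2:ℝ) • pnu 0) (ω, ν) := by
    have e : (fun p : (Fin 3 → ℝ) × (Fin 3 → ℝ) =>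
        2*(p.1 0 ^ 2 + p.1 1 ^ 2) + p.1 2 ^ 2 - 2 * p.2 0) =
        (fun p : (Fin 3 → ℝ) × (Fin 3 → ℝ) =>
        2*(p.1 0 * p.1 0 + p.1 1 * p.1 1) + p.1 2 * p.1 2 - 2 * p.2 0) := by
      funext p; ring
    rw [e]
    have h' := ((((hom 0).mul (hom 0)).add ((hom 1).mul (hom 1))).const_mul (2:ℝ)).add
      ((hom 2).mul (hom 2)) |>.sub ((hnu 0).const_mul (2:ℝ))
    exact h'.congr_fderiv (by ext w <;> (simp [pom, pnu]; try ring))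
  -- derivative of G'
  have d1 : HasFDerivAt (fun p : (Fin 3 → ℝ) × (Fin 3 → ℝ) =>
      2*(p.1 0 * p.2 0 + p.1 1 * p.2 1) + p.1 2 * p.2 2)
      ((2*ν 0) • pom 0 + (2*ν 1) • pom 1 + (ν 2) • pom 2 +
       (2*ω 0) • pnu 0 + (2*ω 1) • pnu 1 + (ω 2) • pnu 2) (ω, ν) := by
    have h' := ((((hom 0).mul (hnu 0)).add ((hom 1).mul (hnu 1))).const_mul (2:ℝ)).add
      ((hom 2).mul (hnu 2))
    exact h'.congr_fderiv (by ext w <;> (simp [pom, pnu]; try ring))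
  -- derivative of Γ
  have d2 : HasFDerivAt (fun p : (Fin 3 → ℝ) × (Fin 3 → ℝ) =>
      p.2 0 ^ 2 + p.2 1 ^ 2 + p.2 2 ^ 2)
      ((2*ν 0) • pnu 0 + (2*ν 1) • pnu 1 + (2*ν 2) • pnu 2) (ω, ν) := by
    have e : (fun p : (Fin 3 → ℝ) × (Fin 3 → ℝ) =>
        p.2 0 ^ 2 + p.2 1 ^ 2 + p.2 2 ^ 2) =
        (fun p : (Fin 3 → ℝ) × (Fin 3 → ℝ) =>
        p.2 0 * p.2 0 + p.2 1 * p.2 1 + p.2 2 * p.2 2) := by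
      funext p; ring
    rw [e]
    have h' := (((hnu 0).mul (hnu 0)).add ((hnu 1).mul (hnu 1))).add ((hnu 2).mul (hnu 2))
    exact h'.congr_fderiv (by ext w <;> (simp [pom, pnu]; try ring))
  -- derivative of K
  have d3 : HasFDerivAt (fun p : (Fin 3 → ℝ) × (Fin 3 → ℝ) =>
      (p.1 0 ^ 2 - p.1 1 ^ 2 + p.2 0)^2 + (2 * p.1 0 * p.1 1 + p.2 1)^2)
      ((4*((ω 0 ^ 2 - ω 1 ^ 2 + ν 0)*ω 0 + (2*ω 0*ω 1 + ν 1)*ω 1)) • pom 0 +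
       (4*((2*ω 0*ω 1 + ν 1)*ω 0 - (ω 0 ^ 2 - ω 1 ^ 2 + ν 0)*ω 1)) • pom 1 +
       (2*(ω 0 ^ 2 - ω 1 ^ 2 + ν 0)) • pnu 0 +
       (2*(2*ω 0*ω 1 + ν 1)) • pnu 1) (ω, ν) := by
    have e : (fun p : (Fin 3 → ℝ) × (Fin 3 → ℝ) =>
        (p.1 0 ^ 2 - p.1 1 ^ 2 + p.2 0)^2 + (2 * p.1 0 * p.1 1 + p.2 1)^2) =
        (fun p : (Fin 3 → ℝ) × (Fin 3 → ℝ) =>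
        (p.1 0 * p.1 0 - p.1 1 * p.1 1 + p.2 0)*(p.1 0 * p.1 0 - p.1 1 * p.1 1 + p.2 0) +
        (2 * p.1 0 * p.1 1 + p.2 1)*(2 * p.1 0 * p.1 1 + p.2 1)) := by
      funext p; ring
    rw [e]
    have hz1 := (((hom 0).mul (hom 0)).sub ((hom 1).mul (hom 1))).add (hnu 0)
    have hz2 := (((hom 0).const_mul (2:ℝ)).mul (hom 1)).add (hnu 1)
    have h' := (hz1.mul hz1).add (hz2.mul hz2)
    exact h'.congr_fderiv (by ext w <;> (simp [pom, pnu]; try ring))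
  obtain ⟨cc, hsum, i, hi⟩ := Fintype.not_linearIndependent_iff.mp hdep
  rw [Fin.sum_univ_four] at hsum
  simp only [Matrix.cons_val_zero, Matrix.cons_val_one, Matrix.head_cons,
    Matrix.cons_val_two, Matrix.tail_cons, Matrix.cons_val_three] at hsum
  rw [d0.fderiv, d1.fderiv, d2.fderiv, d3.fderiv] at hsum
  have ev : ∀ w : (Fin 3 → ℝ) × (Fin 3 → ℝ),
      cc 0 * (((4*ω 0) • pom 0 + (4*ω 1) • pom 1 + (2*ω 2) • pom 2 - (2:ℝ) • pnu 0) w) +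
      cc 1 * (((2*ν 0) • pom 0 + (2*ν 1) • pom 1 + (ν 2) • pom 2 +
       (2*ω 0) • pnu 0 + (2*ω 1) • pnu 1 + (ω 2) • pnu 2) w) +
      cc 2 * (((2*ν 0) • pnu 0 + (2*ν 1) • pnu 1 + (2*ν 2) • pnu 2) w) +
      cc 3 * (((4*((ω 0 ^ 2 - ω 1 ^ 2 + ν 0)*ω 0 + (2*ω 0*ω 1 + ν 1)*ω 1)) • pom 0 +
       (4*((2*ω 0*ω 1 + ν 1)*ω 0 - (ω 0 ^ 2 - ω 1 ^ 2 + ν 0)*ω 1)) • pom 1 +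
       (2*(ω 0 ^ 2 - ω 1 ^ 2 + ν 0)) • pnu 0 +
       (2*(2*ω 0*ω 1 + ν 1)) • pnu 1) w) = 0 := by
    intro w
    have h0 := DFunLike.congr_fun hsum w
    simp at h0 ⊢
    linear_combination h0
  have E1 := ev ((Pi.single 0 1 : Fin 3 → ℝ), (0 : Fin 3 → ℝ))
  have E2 := ev ((Pi.single 1 1 : Fin 3 → ℝ), (0 : Fin 3 → ℝ))
  have E3 := ev ((Pi.single 2 1 : Fin 3 → ℝ), (0 : Fin 3 → ℝ))
  have E4 := ev ((0 : Fin 3 → ℝ), (Pi.single 0 1 : Fin 3 → ℝ))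
  have E5 := ev ((0 : Fin 3 → ℝ), (Pi.single 1 1 : Fin 3 → ℝ))
  have E6 := ev ((0 : Fin 3 → ℝ), (Pi.single 2 1 : Fin 3 → ℝ))
  simp [pom, pnu] at E1 E2 E3 E4 E5 E6
  have hk0 : 0 ≤ k := by rw [hk]; positivity
  have hh2 : 2*(2*g^2 + Real.sqrt k) = 2*(ω 0 ^ 2 + ω 1 ^ 2) + ω 2 ^ 2 - 2 * ν 0 := by
    rw [← hbranch]; exact hh
  have hex : ¬(cc 0 = 0 ∧ cc 1 = 0 ∧ cc 2 = 0 ∧ cc 3 = 0) := by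
    rintro ⟨h1, h2, h3, h4⟩; fin_cases i <;> simp_all
  exact algebra_main (ω 0) (ω 1) (ω 2) (ν 0) (ν 1) (ν 2) (cc 0) (cc 1) (cc 2) (cc 3)
    g (Real.sqrt k) k hunit hg hh2 hk (Real.sqrt_nonneg k) (Real.sq_sqrt hk0) hg0 hex
    (by linear_combination E1) (by linear_combination E2) (by linear_combination E3)
    (by linear_combination E4) (by linear_combination E5) (by linear_combination E6)
end
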